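/- arXiv:2509.22531 — 3 statements merged into one kernel-verified Lean document; each statement's English description precedes it below -/
import Mathlib

section
/- Suppose the estimate τ̂ satisfies the excess-risk bound L_DR(τ̂, (μ̂,ω̂)) − L_DR(τ₀, (μ̂,ω̂)) ≤ R for some R ≥ 0, where τ₀(X) = μ₀(1,X) − μ₀(0,X). Then ‖τ̂ − τ₀‖²₂ ≤ 2R + 8·‖ω̂(T,X) − ω₀(T,X)‖²₄·‖μ̂(T,X) − μ₀(T,X)‖²₄, where all norms are L^p(P) norms. -/
open MeasureTheory
open scoped ENNReal

noncomputable section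

namespace DRaux

variable {α : Type*} {m m0 : MeasurableSpace α} {P : Measure α}

/-- Pull-out property of conditional expectation at the level of integrals. -/
lemma pullout_integral (hm : m ≤ m0) (P : Measure α) [IsFiniteMeasure P] {f g : α → ℝ}
    (hf : StronglyMeasurable[m] f) (hfg : Integrable (fun ω => f ω * g ω) P)
    (hg : Integrable g P) :
    ∫ ω, f ω * g ω ∂P = ∫ ω, f ω * (P[g|m]) ω ∂P := by
  haveI : SigmaFinite (P.trim hm) := inferInstance
  have h1 : P[f * g|m] =ᵐ[P] f * P[g|m] := condExp_mul_of_stronglyMeasurable_left hf hfg hg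
  calc ∫ ω, f ω * g ω ∂P = ∫ ω, (P[f * g|m]) ω ∂P := (integral_condExp hm).symm
    _ = ∫ ω, f ω * (P[g|m]) ω ∂P := integral_congr_ae (h1.mono fun ω h => by simpa using h)

/-- Hölder: a product of two L² functions is integrable. -/
lemma integrable_mul_L2 {f g : α → ℝ} (hf : MemLp f 2 P) (hg : MemLp g 2 P) :
    Integrable (fun ω => f ω * g ω) P := by
  rw [← memLp_one_iff_integrable]
  refine ⟨hf.1.mul hg.1, ?_⟩
  have h : eLpNorm (fun ω => f ω * g ω) 1 P ≤ eLpNorm f 2 P * eLpNorm g 2 P := by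
    haveI : ENNReal.HolderTriple 2 2 1 := ⟨by simp [ENNReal.inv_two_add_inv_two]⟩
    simpa using eLpNorm_le_eLpNorm_mul_eLpNorm_of_nnnorm hf.1 hg.1 (fun a b => a * b) 1
      (Filter.Eventually.of_forall fun ω => by simp [nnnorm_mul])
  exact lt_of_le_of_lt h (ENNReal.mul_lt_top hf.2 hg.2)

/-- Hölder for the L¹ norm of a product against L² norms. -/
lemma eLpNorm_one_mul_le {f g : α → ℝ} (hf : AEStronglyMeasurable f P)
    (hg : AEStronglyMeasurable g P) :
    eLpNorm (fun ω => f ω * g ω) 1 P ≤ eLpNorm f 2 P * eLpNorm g 2 P := by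
  haveI : ENNReal.HolderTriple 2 2 1 := ⟨by simp [ENNReal.inv_two_add_inv_two]⟩
  simpa using eLpNorm_le_eLpNorm_mul_eLpNorm_of_nnnorm hf hg (fun a b => a * b) 1
    (Filter.Eventually.of_forall fun ω => by simp [nnnorm_mul])

/-- Hölder: the L² norm of a product against L⁴ norms. -/
lemma eLpNorm_two_mul_le {f g : α → ℝ} (hf : AEStronglyMeasurable f P)
    (hg : AEStronglyMeasurable g P) :
    eLpNorm (fun ω => f ω * g ω) 2 P ≤ eLpNorm f 4 P * eLpNorm g 4 P := by
  have : (4 : ℝ≥0∞)⁻¹ + 4⁻¹ = 2⁻¹ := by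
    rw [← two_mul, show (4 : ℝ≥0∞) = 2 * 2 by norm_num,
      ENNReal.mul_inv (Or.inl (by norm_num)) (Or.inl (by norm_num)), ← mul_assoc,
      ENNReal.mul_inv_cancel (by norm_num) (by norm_num), one_mul]
  haveI : ENNReal.HolderTriple 4 4 2 := ⟨this⟩
  simpa using eLpNorm_le_eLpNorm_mul_eLpNorm_of_nnnorm hf hg (fun a b => a * b) 1
    (Filter.Eventually.of_forall fun ω => by simp [nnnorm_mul])

/-- The square of the L² seminorm as a lintegral. -/
lemma eLpNorm_two_sq (f : α → ℝ) :
    eLpNorm f 2 P ^ 2 = ∫⁻ ω, ENNReal.ofReal (f ω ^ 2) ∂P := by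
  have key : ∫⁻ ω, ‖f ω‖ₑ ^ (2 : ℝ) ∂P = ∫⁻ ω, ENNReal.ofReal (f ω ^ 2) ∂P :=
    lintegral_congr fun ω => by
      rw [Real.enorm_eq_ofReal_abs,
        ENNReal.ofReal_rpow_of_nonneg (abs_nonneg _) (by norm_num : (0:ℝ) ≤ 2)]
      congr 1
      rw [show ((2 : ℝ)) = ((2 : ℕ) : ℝ) by norm_num, Real.rpow_natCast, sq_abs]
  rw [eLpNorm_eq_lintegral_rpow_enorm_toReal (by norm_num) (by norm_num)]
  have h2 : ((2 : ℝ≥0∞).toReal) = (2 : ℝ) := by simp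
  rw [h2, key, ← ENNReal.rpow_natCast _ 2, ← ENNReal.rpow_mul]
  norm_num

/-- The conditional expectation of an L² function is L². -/
lemma memℒp_two_condexp (hm : m ≤ m0) (P : Measure α) [IsFiniteMeasure P] {f : α → ℝ}
    (hf : MemLp f 2 P) : MemLp (P[f|m]) 2 P := by
  haveI : SigmaFinite (P.trim hm) := inferInstance
  exact hf.condExp one_le_two

/-- If an L² function `q` agrees with `b ∘ X` on the event `{T = 1}` whose conditional
probability given `X` is bounded below by `c > 0`, then `b ∘ X ∈ L²`. -/
lemma memℒp_retrieval
    {Ω 𝒳 : Type*} [MeasurableSpace Ω] [MeasurableSpace 𝒳]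
    (P : Measure Ω) [IsProbabilityMeasure P]
    (X : Ω → 𝒳) (T : Ω → ℝ) (hX : Measurable X) (hT : Measurable T)
    (hT01 : ∀ ω, T ω = 0 ∨ T ω = 1)
    (π : 𝒳 → ℝ) (hπ_meas : Measurable π)
    (hπ : (fun ω => π (X ω)) =ᵐ[P] P[T | MeasurableSpace.comap X inferInstance])
    (c : ℝ) (hc0 : 0 < c) (hπc : ∀ x, c ≤ π x)
    (b : 𝒳 → ℝ) (hb : Measurable b)
    (q : Ω → ℝ) (hq2 : MemLp q 2 P)
    (hqb : ∀ ω, T ω = 1 → b (X ω) = q ω) :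
    MemLp (fun ω => b (X ω)) 2 P := by
  have hmX : MeasurableSpace.comap X inferInstance ≤ _ := hX.comap_le
  have hXmX : Measurable[MeasurableSpace.comap X inferInstance] X :=
    Measurable.of_comap_le le_rfl
  have hπpos : ∀ x, 0 < π x := fun x => lt_of_lt_of_le hc0 (hπc x)
  have hTint : Integrable T P := by
    refine (MemLp.of_bound hT.aestronglyMeasurable 1 ?_).integrable le_rfl
    exact Filter.Eventually.of_forall fun ω => by
      rcases hT01 ω with h | h <;> simp [h]
  have hq2int : Integrable (fun ω => q ω ^ 2) P := hq2.integrable_sq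
  have key : ∀ n : ℕ, ∫ ω, min (b (X ω) ^ 2) (n : ℝ) ∂P ≤ c⁻¹ * ∫ ω, q ω ^ 2 ∂P := by
    intro n
    set f : Ω → ℝ := fun ω => min (b (X ω) ^ 2) (n : ℝ) / π (X ω) with hf
    have hfmeasX : Measurable[MeasurableSpace.comap X inferInstance] f :=
      (((hb.comp hXmX).pow_const 2).min measurable_const).div (hπ_meas.comp hXmX)
    have hfmeas : Measurable f := hfmeasX.mono hmX le_rfl
    have hfnonneg : ∀ ω, 0 ≤ f ω := fun ω =>
      div_nonneg (le_min (sq_nonneg _) (Nat.cast_nonneg n)) (hπpos _).le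
    have hfbdd : ∀ ω, ‖f ω‖ ≤ (n : ℝ) / c := by
      intro ω
      rw [Real.norm_eq_abs, abs_of_nonneg (hfnonneg ω)]
      exact div_le_div₀ (Nat.cast_nonneg n) (min_le_right _ _) hc0 (hπc _)
    have hfT_int : Integrable (fun ω => f ω * T ω) P :=
      hTint.bdd_mul hfmeas.aestronglyMeasurable (Filter.Eventually.of_forall hfbdd)
    have h1 : ∫ ω, f ω * T ω ∂P
        = ∫ ω, f ω * (P[T|MeasurableSpace.comap X inferInstance]) ω ∂P :=
      pullout_integral hmX P hfmeasX.stronglyMeasurable hfT_int hTint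
    have h2 : ∫ ω, f ω * (P[T|MeasurableSpace.comap X inferInstance]) ω ∂P
        = ∫ ω, f ω * π (X ω) ∂P :=
      integral_congr_ae (by filter_upwards [hπ] with ω h; rw [← h])
    have h3 : ∫ ω, f ω * π (X ω) ∂P = ∫ ω, min (b (X ω) ^ 2) (n : ℝ) ∂P :=
      integral_congr_ae (Filter.Eventually.of_forall fun ω => by
        rw [hf]; exact div_mul_cancel₀ _ (hπpos (X ω)).ne')
    have h4 : ∫ ω, f ω * T ω ∂P ≤ ∫ ω, c⁻¹ * q ω ^ 2 ∂P := by
      refine integral_mono hfT_int (hq2int.const_mul c⁻¹) fun ω => ?_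
      rcases hT01 ω with h | h
      · rw [h, mul_zero]
        positivity
      · rw [h, mul_one, hf]
        have hbq : b (X ω) = q ω := hqb ω h
        calc min (b (X ω) ^ 2) (n : ℝ) / π (X ω) ≤ b (X ω) ^ 2 / c :=
              div_le_div₀ (sq_nonneg _) (min_le_left _ _) hc0 (hπc _)
          _ = c⁻¹ * q ω ^ 2 := by rw [hbq, div_eq_inv_mul]
    calc ∫ ω, min (b (X ω) ^ 2) (n : ℝ) ∂P = ∫ ω, f ω * T ω ∂P := by rw [h1, h2, h3]
      _ ≤ ∫ ω, c⁻¹ * q ω ^ 2 ∂P := h4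
      _ = c⁻¹ * ∫ ω, q ω ^ 2 ∂P := integral_const_mul _ _
  refine ⟨(hb.comp hX).aestronglyMeasurable, ?_⟩
  have hsq : eLpNorm (fun ω => b (X ω)) 2 P ^ 2
      = ∫⁻ ω, ENNReal.ofReal (b (X ω) ^ 2) ∂P := eLpNorm_two_sq _
  have hmeas_n : ∀ n : ℕ, Measurable fun ω => ENNReal.ofReal (min (b (X ω) ^ 2) (n : ℝ)) :=
    fun n => (((hb.comp hX).pow_const 2).min measurable_const).ennreal_ofReal
  have hmono : Monotone fun n : ℕ => fun ω => ENNReal.ofReal (min (b (X ω) ^ 2) (n : ℝ)) :=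
    fun i j hij ω => ENNReal.ofReal_le_ofReal
      (min_le_min le_rfl (by exact_mod_cast hij))
  have hsup : ∀ ω, (⨆ n : ℕ, ENNReal.ofReal (min (b (X ω) ^ 2) (n : ℝ)))
      = ENNReal.ofReal (b (X ω) ^ 2) := by
    intro ω
    refine le_antisymm (iSup_le fun n => ENNReal.ofReal_le_ofReal (min_le_left _ _)) ?_
    refine le_iSup_of_le ⌈b (X ω) ^ 2⌉₊ (le_of_eq ?_)
    rw [min_eq_left (Nat.le_ceil _)]
  have hMCT : ∫⁻ ω, ENNReal.ofReal (b (X ω) ^ 2) ∂P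
      = ⨆ n : ℕ, ∫⁻ ω, ENNReal.ofReal (min (b (X ω) ^ 2) (n : ℝ)) ∂P := by
    rw [← lintegral_iSup hmeas_n hmono]
    exact lintegral_congr fun ω => (hsup ω).symm
  have hint_n : ∀ n : ℕ, Integrable (fun ω => min (b (X ω) ^ 2) (n : ℝ)) P := by
    intro n
    refine (MemLp.of_bound (((hb.comp hX).pow_const 2).min
      measurable_const).aestronglyMeasurable (n : ℝ) ?_).integrable le_rfl
    refine Filter.Eventually.of_forall fun ω => ?_
    rw [Real.norm_eq_abs, abs_of_nonneg (le_min (sq_nonneg _) (Nat.cast_nonneg n))]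
    exact min_le_right _ _
  have hfin : ∫⁻ ω, ENNReal.ofReal (b (X ω) ^ 2) ∂P
      ≤ ENNReal.ofReal (c⁻¹ * ∫ ω, q ω ^ 2 ∂P) := by
    rw [hMCT]
    refine iSup_le fun n => ?_
    rw [← ofReal_integral_eq_lintegral_ofReal (hint_n n)
      (Filter.Eventually.of_forall fun ω => le_min (sq_nonneg _) (Nat.cast_nonneg n))]
    exact ENNReal.ofReal_le_ofReal (key n)
  have hlt : eLpNorm (fun ω => b (X ω)) 2 P ^ 2 < ⊤ := by
    rw [hsq]
    exact lt_of_le_of_lt hfin ENNReal.ofReal_lt_top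
  rw [lt_top_iff_ne_top]
  intro h
  rw [h, ENNReal.top_pow (by norm_num)] at hlt
  exact lt_irrefl _ hlt

end DRaux

/-- **Error analysis of the DR-learner.** If
L_DR(τ̂,(μ̂,ω̂)) − L_DR(τ₀,(μ̂,ω̂)) ≤ R with τ₀(X) = μ₀(1,X) − μ₀(0,X), then
‖τ̂ − τ₀‖²₂ ≤ 2R + 8‖ω̂(T,X) − ω₀(T,X)‖²₄·‖μ̂(T,X) − μ₀(T,X)‖²₄. -/
theorem dr_learner_error
    {Ω 𝒳 : Type*} [MeasurableSpace Ω] [MeasurableSpace 𝒳]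
    (P : Measure Ω) [IsProbabilityMeasure P]
    (X : Ω → 𝒳) (T Y : Ω → ℝ)
    (hX : Measurable X) (hT : Measurable T) (hY : Measurable Y)
    (hT01 : ∀ ω, T ω = 0 ∨ T ω = 1) (hY2 : MemLp Y 2 P)
    (μ₀ : ℝ → 𝒳 → ℝ) (hμ₀_meas : Measurable fun p : ℝ × 𝒳 => μ₀ p.1 p.2)
    (hμ₀ : (fun ω => μ₀ (T ω) (X ω))
        =ᵐ[P] P[Y | MeasurableSpace.comap (fun ω => (T ω, X ω)) inferInstance])
    (π₀ : 𝒳 → ℝ) (hπ₀_meas : Measurable π₀)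
    (hπ₀ : (fun ω => π₀ (X ω)) =ᵐ[P] P[T | MeasurableSpace.comap X inferInstance])
    (c : ℝ) (hc0 : 0 < c) (hc2 : c < 1 / 2)
    (hc : ∀ x, c ≤ π₀ x ∧ π₀ x ≤ 1 - c)
    -- the true inverse-propensity weight ω₀(t,x) = (2t−1)/(t·π₀(x) + (1−t)(1−π₀(x)))
    (w₀ : ℝ → 𝒳 → ℝ)
    (hw₀ : ∀ t x, w₀ t x = (2 * t - 1) / (t * π₀ x + (1 - t) * (1 - π₀ x)))
    -- bounded measurable estimates and a square-integrable candidate τ̂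
    (μh wh : ℝ → 𝒳 → ℝ)
    (hμh_meas : Measurable fun p : ℝ × 𝒳 => μh p.1 p.2)
    (hwh_meas : Measurable fun p : ℝ × 𝒳 => wh p.1 p.2)
    (B : ℝ) (hμh_bdd : ∀ t x, |μh t x| ≤ B) (hwh_bdd : ∀ t x, |wh t x| ≤ B)
    (τh : 𝒳 → ℝ) (hτh_meas : Measurable τh) (hτh2 : MemLp (fun ω => τh (X ω)) 2 P)
    -- the excess-risk bound for the DR loss
    (R : ℝ) (hR : 0 ≤ R)
    (hexc : (∫ ω, (wh (T ω) (X ω) * (Y ω - μh (T ω) (X ω))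
            + μh 1 (X ω) - μh 0 (X ω) - τh (X ω)) ^ 2 ∂P)
        - (∫ ω, (wh (T ω) (X ω) * (Y ω - μh (T ω) (X ω))
            + μh 1 (X ω) - μh 0 (X ω) - (μ₀ 1 (X ω) - μ₀ 0 (X ω))) ^ 2 ∂P) ≤ R) :
    eLpNorm (fun ω => τh (X ω) - (μ₀ 1 (X ω) - μ₀ 0 (X ω))) 2 P ^ 2
      ≤ 2 * ENNReal.ofReal R
        + 8 * eLpNorm (fun ω => wh (T ω) (X ω) - w₀ (T ω) (X ω)) 4 P ^ 2 *
            eLpNorm (fun ω => μh (T ω) (X ω) - μ₀ (T ω) (X ω)) 4 P ^ 2 := by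
  classical
  -- σ-algebras
  have hm : MeasurableSpace.comap (fun ω => (T ω, X ω)) inferInstance ≤ _ :=
    (hT.prodMk hX).comap_le
  have hmX : MeasurableSpace.comap X inferInstance ≤ _ := hX.comap_le
  have hTXm : Measurable[MeasurableSpace.comap (fun ω => (T ω, X ω)) inferInstance]
      (fun ω => (T ω, X ω)) := Measurable.of_comap_le le_rfl
  have hXmX : Measurable[MeasurableSpace.comap X inferInstance] X :=
    Measurable.of_comap_le le_rfl
  -- measurability of slices and compositions
  have hμ₀1_meas : Measurable (fun x => μ₀ 1 x) :=
    hμ₀_meas.comp (measurable_const.prodMk measurable_id)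
  have hμ₀0_meas : Measurable (fun x => μ₀ 0 x) :=
    hμ₀_meas.comp (measurable_const.prodMk measurable_id)
  have hμh1_meas : Measurable (fun x => μh 1 x) :=
    hμh_meas.comp (measurable_const.prodMk measurable_id)
  have hμh0_meas : Measurable (fun x => μh 0 x) :=
    hμh_meas.comp (measurable_const.prodMk measurable_id)
  have hμ₀TX_meas : Measurable (fun ω => μ₀ (T ω) (X ω)) := hμ₀_meas.comp (hT.prodMk hX)
  have hμhTX_meas : Measurable (fun ω => μh (T ω) (X ω)) := hμh_meas.comp (hT.prodMk hX)
  have hwhTX_meas : Measurable (fun ω => wh (T ω) (X ω)) := hwh_meas.comp (hT.prodMk hX)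
  have hπ₀X_meas : Measurable (fun ω => π₀ (X ω)) := hπ₀_meas.comp hX
  have hw₀TX_eq : (fun ω => w₀ (T ω) (X ω)) = fun ω =>
      (2 * T ω - 1) / (T ω * π₀ (X ω) + (1 - T ω) * (1 - π₀ (X ω))) :=
    funext fun ω => hw₀ _ _
  have hw₀TX_meas : Measurable (fun ω => w₀ (T ω) (X ω)) := by
    rw [hw₀TX_eq]
    exact ((hT.const_mul 2).sub measurable_const).div
      ((hT.mul hπ₀X_meas).add ((measurable_const.sub hT).mul
        (measurable_const.sub hπ₀X_meas)))
  -- basic positivity facts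
  have hπpos : ∀ x, 0 < π₀ x := fun x => lt_of_lt_of_le hc0 (hc x).1
  have h1πpos : ∀ x, 0 < 1 - π₀ x := fun x => lt_of_lt_of_le hc0 (by linarith [(hc x).2])
  have hc1π : ∀ x, c ≤ 1 - π₀ x := fun x => by linarith [(hc x).2]
  have hinvle : ∀ {x y : ℝ}, 0 < x → x ≤ y → y⁻¹ ≤ x⁻¹ := fun hx hxy => by
    rw [← one_div, ← one_div]
    exact one_div_le_one_div_of_le hx hxy
  -- explicit values of the true weight
  have hw₀0 : ∀ x, w₀ 0 x = -(1 - π₀ x)⁻¹ := fun x => by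
    rw [hw₀, show (2 * (0:ℝ) - 1) = -1 by norm_num,
      show ((0:ℝ) * π₀ x + (1 - 0) * (1 - π₀ x)) = 1 - π₀ x by ring, div_eq_mul_inv]
    ring
  have hw₀1 : ∀ x, w₀ 1 x = (π₀ x)⁻¹ := fun x => by
    rw [hw₀, show (2 * (1:ℝ) - 1) = 1 by norm_num,
      show ((1:ℝ) * π₀ x + (1 - 1) * (1 - π₀ x)) = π₀ x by ring, one_div]
  have hw₀bdd : ∀ ω, |w₀ (T ω) (X ω)| ≤ c⁻¹ := by
    intro ω
    rcases hT01 ω with h | h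
    · rw [h, hw₀0, abs_neg, abs_of_pos (inv_pos.mpr (h1πpos _))]
      exact hinvle hc0 (hc1π _)
    · rw [h, hw₀1, abs_of_pos (inv_pos.mpr (hπpos _))]
      exact hinvle hc0 (hc _).1
  -- MemLp facts
  have memBdd : ∀ (f : Ω → ℝ) (C : ℝ), Measurable f → (∀ ω, |f ω| ≤ C) → MemLp f 2 P :=
    fun f C hf hC => MemLp.of_bound hf.aestronglyMeasurable C
      (Filter.Eventually.of_forall fun ω => by rw [Real.norm_eq_abs]; exact hC ω)
  have memMulBdd : ∀ (f q : Ω → ℝ) (C : ℝ), Measurable f → (∀ ω, |f ω| ≤ C) →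
      MemLp q 2 P → MemLp (fun ω => f ω * q ω) 2 P := by
    intro f q C hf hC hq
    refine MemLp.of_le (hq.const_mul C) (hf.aestronglyMeasurable.mul hq.1)
      (Filter.Eventually.of_forall fun ω => ?_)
    rw [Real.norm_eq_abs, Real.norm_eq_abs, abs_mul, abs_mul]
    exact mul_le_mul_of_nonneg_right ((hC ω).trans (le_abs_self C)) (abs_nonneg _)
  have hTnorm : ∀ ω, ‖T ω‖ ≤ 1 := fun ω => by
    rcases hT01 ω with h | h <;> rw [Real.norm_eq_abs, h] <;> norm_num
  have hTint : Integrable T P :=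
    (memBdd T 1 hT fun ω => by rw [← Real.norm_eq_abs]; exact hTnorm ω).integrable one_le_two
  have hmulBdd : ∀ (f b : Ω → ℝ) (C : ℝ), Integrable f P → Measurable b →
      (∀ ω, ‖b ω‖ ≤ C) → Integrable (fun ω => f ω * b ω) P :=
    fun f b C hf hb hbC => (hf.bdd_mul hb.aestronglyMeasurable (Filter.Eventually.of_forall hbC)).congr
      (Filter.Eventually.of_forall fun ω => mul_comm (b ω) (f ω))
  have hA2 : MemLp (fun ω => wh (T ω) (X ω)) 2 P := memBdd _ B hwhTX_meas fun ω => hwh_bdd _ _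
  have hM2 : MemLp (fun ω => μh (T ω) (X ω)) 2 P := memBdd _ B hμhTX_meas fun ω => hμh_bdd _ _
  have hK12 : MemLp (fun ω => μh 1 (X ω)) 2 P :=
    memBdd _ B (hμh1_meas.comp hX) fun ω => hμh_bdd _ _
  have hK02 : MemLp (fun ω => μh 0 (X ω)) 2 P :=
    memBdd _ B (hμh0_meas.comp hX) fun ω => hμh_bdd _ _
  have hM02 : MemLp (fun ω => μ₀ (T ω) (X ω)) 2 P :=
    (DRaux.memℒp_two_condexp hm P hY2).ae_eq hμ₀.symm
  have hN12 : MemLp (fun ω => μ₀ 1 (X ω)) 2 P :=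
    DRaux.memℒp_retrieval P X T hX hT hT01 π₀ hπ₀_meas hπ₀ c hc0
      (fun x => (hc x).1) (fun x => μ₀ 1 x) hμ₀1_meas _ hM02 fun ω h => by rw [h]
  have hN02 : MemLp (fun ω => μ₀ 0 (X ω)) 2 P := by
    have hT' : Measurable (fun ω => 1 - T ω) := measurable_const.sub hT
    have hT'01 : ∀ ω, (1:ℝ) - T ω = 0 ∨ (1:ℝ) - T ω = 1 := fun ω => by
      rcases hT01 ω with h | h
      · right; rw [h]; norm_num
      · left; rw [h]; norm_num
    have hπ' : (fun ω => 1 - π₀ (X ω))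
        =ᵐ[P] P[(fun ω => 1 - T ω)|MeasurableSpace.comap X inferInstance] := by
      have hsub : P[(fun _ : Ω => (1:ℝ)) - T|MeasurableSpace.comap X inferInstance]
          =ᵐ[P] P[(fun _ : Ω => (1:ℝ))|MeasurableSpace.comap X inferInstance]
            - P[T|MeasurableSpace.comap X inferInstance] :=
        condExp_sub (integrable_const 1) hTint _
      have hone : P[(fun _ : Ω => (1:ℝ))|MeasurableSpace.comap X inferInstance]
          = fun _ => 1 := condExp_const hmX 1
      have hTT : (fun ω => (1:ℝ) - T ω) = (fun _ : Ω => (1:ℝ)) - T := rfl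
      rw [hTT]
      filter_upwards [hsub, hπ₀] with ω h1 h2
      rw [h1, Pi.sub_apply, hone, ← h2]
    refine DRaux.memℒp_retrieval P X (fun ω => 1 - T ω) hX hT' hT'01
      (fun x => 1 - π₀ x) (measurable_const.sub hπ₀_meas) hπ' c hc0 hc1π
      (fun x => μ₀ 0 x) hμ₀0_meas _ hM02 fun ω h => by
        have h' : (1:ℝ) - T ω = 1 := h
        have h0 : T ω = 0 := by linarith
        rw [h0]
  have hτ₀2 : MemLp (fun ω => μ₀ 1 (X ω) - μ₀ 0 (X ω)) 2 P := hN12.sub hN02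
  have hg2 : MemLp (fun ω => (τh (X ω) - (μ₀ 1 (X ω) - μ₀ 0 (X ω)))) 2 P := hτh2.sub hτ₀2
  have hU2 : MemLp (fun ω => Y ω - μh (T ω) (X ω)) 2 P := hY2.sub hM2
  have hAU2 : MemLp (fun ω => wh (T ω) (X ω) * (Y ω - μh (T ω) (X ω))) 2 P :=
    memMulBdd _ _ B hwhTX_meas (fun ω => hwh_bdd _ _) hU2
  have hD2 : MemLp (fun ω => (wh (T ω) (X ω) * (Y ω - μh (T ω) (X ω)) + μh 1 (X ω) - μh 0 (X ω) - (μ₀ 1 (X ω) - μ₀ 0 (X ω)))) 2 P := ((hAU2.add hK12).sub hK02).sub hτ₀2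
  have hΔ2 : MemLp (fun ω => (μh (T ω) (X ω) - μ₀ (T ω) (X ω))) 2 P := hM2.sub hM02
  have hEbdd : ∀ ω, |(wh (T ω) (X ω) - w₀ (T ω) (X ω))| ≤ B + c⁻¹ := fun ω =>
    (abs_sub _ _).trans (add_le_add (hwh_bdd _ _) (hw₀bdd ω))
  have hE_meas : Measurable (fun ω => (wh (T ω) (X ω) - w₀ (T ω) (X ω))) := hwhTX_meas.sub hw₀TX_meas
  have hEΔ2 : MemLp (fun ω => (wh (T ω) (X ω) - w₀ (T ω) (X ω)) * (μh (T ω) (X ω) - μ₀ (T ω) (X ω))) 2 P :=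
    memMulBdd _ _ (B + c⁻¹) hE_meas hEbdd hΔ2
  have hδ12 : MemLp (fun ω => (μh 1 (X ω) - μ₀ 1 (X ω))) 2 P := hK12.sub hN12
  have hδ02 : MemLp (fun ω => (μh 0 (X ω) - μ₀ 0 (X ω))) 2 P := hK02.sub hN02
  have hYint : Integrable Y P := hY2.integrable one_le_two
  -- measurability w.r.t. the sub-σ-algebras
  have hgmX : Measurable[MeasurableSpace.comap X inferInstance] (fun ω => (τh (X ω) - (μ₀ 1 (X ω) - μ₀ 0 (X ω)))) :=
    (hτh_meas.sub (hμ₀1_meas.sub hμ₀0_meas)).comp hXmX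
  have hgm : Measurable[MeasurableSpace.comap (fun ω => (T ω, X ω)) inferInstance]
      (fun ω => (τh (X ω) - (μ₀ 1 (X ω) - μ₀ 0 (X ω)))) :=
    ((hτh_meas.sub (hμ₀1_meas.sub hμ₀0_meas)).comp measurable_snd).comp hTXm
  have hwhm : Measurable[MeasurableSpace.comap (fun ω => (T ω, X ω)) inferInstance]
      (fun ω => wh (T ω) (X ω)) := hwh_meas.comp hTXm
  -- the two pull-out identities
  have pullY : ∀ f : Ω → ℝ,
      Measurable[MeasurableSpace.comap (fun ω => (T ω, X ω)) inferInstance] f →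
      MemLp f 2 P → ∫ ω, f ω * Y ω ∂P = ∫ ω, f ω * μ₀ (T ω) (X ω) ∂P := by
    intro f hfm hf2
    rw [DRaux.pullout_integral hm P hfm.stronglyMeasurable
      (DRaux.integrable_mul_L2 hf2 hY2) hYint]
    exact integral_congr_ae (by filter_upwards [hμ₀] with ω h; rw [← h])
  have pullT : ∀ f : Ω → ℝ,
      Measurable[MeasurableSpace.comap X inferInstance] f →
      Integrable (fun ω => f ω * T ω) P →
      ∫ ω, f ω * T ω ∂P = ∫ ω, f ω * π₀ (X ω) ∂P := by
    intro f hfm hfT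
    rw [DRaux.pullout_integral hmX P hfm.stronglyMeasurable hfT hTint]
    exact integral_congr_ae (by filter_upwards [hπ₀] with ω h; rw [← h])
  -- Step 1 : the regression residual integrates to zero against m-measurable L² functions
  have hAg2 : MemLp (fun ω => wh (T ω) (X ω) * (τh (X ω) - (μ₀ 1 (X ω) - μ₀ 0 (X ω)))) 2 P :=
    memMulBdd _ _ B hwhTX_meas (fun ω => hwh_bdd _ _) hg2
  have hT1 : ∫ ω, (wh (T ω) (X ω) * (τh (X ω) - (μ₀ 1 (X ω) - μ₀ 0 (X ω)))) * (Y ω - μ₀ (T ω) (X ω)) ∂P = 0 := by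
    have hi1 : Integrable (fun ω => (wh (T ω) (X ω) * (τh (X ω) - (μ₀ 1 (X ω) - μ₀ 0 (X ω)))) * Y ω) P :=
      DRaux.integrable_mul_L2 hAg2 hY2
    have hi2 : Integrable (fun ω => (wh (T ω) (X ω) * (τh (X ω) - (μ₀ 1 (X ω) - μ₀ 0 (X ω)))) * μ₀ (T ω) (X ω)) P :=
      DRaux.integrable_mul_L2 hAg2 hM02
    calc ∫ ω, (wh (T ω) (X ω) * (τh (X ω) - (μ₀ 1 (X ω) - μ₀ 0 (X ω)))) * (Y ω - μ₀ (T ω) (X ω)) ∂P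
        = ∫ ω, ((wh (T ω) (X ω) * (τh (X ω) - (μ₀ 1 (X ω) - μ₀ 0 (X ω)))) * Y ω - (wh (T ω) (X ω) * (τh (X ω) - (μ₀ 1 (X ω) - μ₀ 0 (X ω)))) * μ₀ (T ω) (X ω)) ∂P :=
          integral_congr_ae (Filter.Eventually.of_forall fun ω => by ring)
      _ = (∫ ω, (wh (T ω) (X ω) * (τh (X ω) - (μ₀ 1 (X ω) - μ₀ 0 (X ω)))) * Y ω ∂P) - ∫ ω, (wh (T ω) (X ω) * (τh (X ω) - (μ₀ 1 (X ω) - μ₀ 0 (X ω)))) * μ₀ (T ω) (X ω) ∂P :=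
          integral_sub hi1 hi2
      _ = 0 := by
          rw [pullY (fun ω => wh (T ω) (X ω) * (τh (X ω) - (μ₀ 1 (X ω) - μ₀ 0 (X ω)))) (hwhm.mul hgm) hAg2]
          ring
  -- Step 2 : the weight identity
  have hδ1g_int : Integrable (fun ω => (μh 1 (X ω) - μ₀ 1 (X ω)) * (τh (X ω) - (μ₀ 1 (X ω) - μ₀ 0 (X ω)))) P := DRaux.integrable_mul_L2 hδ12 hg2
  have hδ0g_int : Integrable (fun ω => (μh 0 (X ω) - μ₀ 0 (X ω)) * (τh (X ω) - (μ₀ 1 (X ω) - μ₀ 0 (X ω)))) P := DRaux.integrable_mul_L2 hδ02 hg2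
  have hπinv_bdd : ∀ ω, ‖(π₀ (X ω))⁻¹‖ ≤ c⁻¹ := fun ω => by
    rw [Real.norm_eq_abs, abs_of_pos (inv_pos.mpr (hπpos _))]
    exact hinvle hc0 (hc _).1
  have h1πinv_bdd : ∀ ω, ‖(1 - π₀ (X ω))⁻¹‖ ≤ c⁻¹ := fun ω => by
    rw [Real.norm_eq_abs, abs_of_pos (inv_pos.mpr (h1πpos _))]
    exact hinvle hc0 (hc1π _)
  have h1int : Integrable (fun ω => (π₀ (X ω))⁻¹ * ((μh 1 (X ω) - μ₀ 1 (X ω)) * (τh (X ω) - (μ₀ 1 (X ω) - μ₀ 0 (X ω))))) P :=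
    hδ1g_int.bdd_mul (hπ₀X_meas.inv).aestronglyMeasurable (Filter.Eventually.of_forall hπinv_bdd)
  have h0int : Integrable (fun ω => (1 - π₀ (X ω))⁻¹ * ((μh 0 (X ω) - μ₀ 0 (X ω)) * (τh (X ω) - (μ₀ 1 (X ω) - μ₀ 0 (X ω))))) P :=
    hδ0g_int.bdd_mul ((measurable_const.sub hπ₀X_meas).inv).aestronglyMeasurable
      (Filter.Eventually.of_forall h1πinv_bdd)
  have h1mX : Measurable[MeasurableSpace.comap X inferInstance] (fun ω => (π₀ (X ω))⁻¹ * ((μh 1 (X ω) - μ₀ 1 (X ω)) * (τh (X ω) - (μ₀ 1 (X ω) - μ₀ 0 (X ω))))) :=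
    ((hπ₀_meas.comp hXmX).inv).mul
      (((hμh1_meas.comp hXmX).sub (hμ₀1_meas.comp hXmX)).mul hgmX)
  have h0mX : Measurable[MeasurableSpace.comap X inferInstance] (fun ω => (1 - π₀ (X ω))⁻¹ * ((μh 0 (X ω) - μ₀ 0 (X ω)) * (τh (X ω) - (μ₀ 1 (X ω) - μ₀ 0 (X ω))))) :=
    ((measurable_const.sub (hπ₀_meas.comp hXmX)).inv).mul
      (((hμh0_meas.comp hXmX).sub (hμ₀0_meas.comp hXmX)).mul hgmX)
  have h1Tint : Integrable (fun ω => ((π₀ (X ω))⁻¹ * ((μh 1 (X ω) - μ₀ 1 (X ω)) * (τh (X ω) - (μ₀ 1 (X ω) - μ₀ 0 (X ω))))) * T ω) P := hmulBdd _ _ 1 h1int hT hTnorm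
  have h0Tint : Integrable (fun ω => ((1 - π₀ (X ω))⁻¹ * ((μh 0 (X ω) - μ₀ 0 (X ω)) * (τh (X ω) - (μ₀ 1 (X ω) - μ₀ 0 (X ω))))) * T ω) P := hmulBdd _ _ 1 h0int hT hTnorm
  have h0subint : Integrable (fun ω => ((1 - π₀ (X ω))⁻¹ * ((μh 0 (X ω) - μ₀ 0 (X ω)) * (τh (X ω) - (μ₀ 1 (X ω) - μ₀ 0 (X ω))))) * (1 - T ω)) P := by
    refine (h0int.sub h0Tint).congr (Filter.Eventually.of_forall fun ω => ?_)
    simp only [Pi.sub_apply]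
    ring
  have hpt : ∀ ω, w₀ (T ω) (X ω) * ((μh (T ω) (X ω) - μ₀ (T ω) (X ω)) * (τh (X ω) - (μ₀ 1 (X ω) - μ₀ 0 (X ω))))
      = ((π₀ (X ω))⁻¹ * ((μh 1 (X ω) - μ₀ 1 (X ω)) * (τh (X ω) - (μ₀ 1 (X ω) - μ₀ 0 (X ω))))) * T ω - ((1 - π₀ (X ω))⁻¹ * ((μh 0 (X ω) - μ₀ 0 (X ω)) * (τh (X ω) - (μ₀ 1 (X ω) - μ₀ 0 (X ω))))) * (1 - T ω) := by
    intro ω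
    rcases hT01 ω with h | h
    · rw [h, hw₀0]
      ring
    · rw [h, hw₀1]
      ring
  have hw₀Δg_int : Integrable (fun ω => w₀ (T ω) (X ω) * ((μh (T ω) (X ω) - μ₀ (T ω) (X ω)) * (τh (X ω) - (μ₀ 1 (X ω) - μ₀ 0 (X ω))))) P := by
    refine (h1Tint.sub h0subint).congr (Filter.Eventually.of_forall fun ω => ?_)
    simp only [Pi.sub_apply]
    rw [hpt ω]
  have hπ₀X_norm : ∀ ω, ‖π₀ (X ω)‖ ≤ 1 := fun ω => by
    rw [Real.norm_eq_abs, abs_of_pos (hπpos _)]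
    linarith [(hc (X ω)).2]
  have hclaim : ∫ ω, w₀ (T ω) (X ω) * ((μh (T ω) (X ω) - μ₀ (T ω) (X ω)) * (τh (X ω) - (μ₀ 1 (X ω) - μ₀ 0 (X ω)))) ∂P = ∫ ω, ((μh 1 (X ω) - μ₀ 1 (X ω)) - (μh 0 (X ω) - μ₀ 0 (X ω))) * (τh (X ω) - (μ₀ 1 (X ω) - μ₀ 0 (X ω))) ∂P := by
    have e1 : ∫ ω, ((π₀ (X ω))⁻¹ * ((μh 1 (X ω) - μ₀ 1 (X ω)) * (τh (X ω) - (μ₀ 1 (X ω) - μ₀ 0 (X ω))))) * T ω ∂P = ∫ ω, (μh 1 (X ω) - μ₀ 1 (X ω)) * (τh (X ω) - (μ₀ 1 (X ω) - μ₀ 0 (X ω))) ∂P := by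
      rw [pullT _ h1mX h1Tint]
      refine integral_congr_ae (Filter.Eventually.of_forall fun ω => ?_)
      have hne : π₀ (X ω) ≠ 0 := (hπpos (X ω)).ne'
      field_simp
    have h0πint : Integrable (fun ω => ((1 - π₀ (X ω))⁻¹ * ((μh 0 (X ω) - μ₀ 0 (X ω)) * (τh (X ω) - (μ₀ 1 (X ω) - μ₀ 0 (X ω))))) * π₀ (X ω)) P :=
      hmulBdd _ _ 1 h0int hπ₀X_meas hπ₀X_norm
    have e0 : ∫ ω, ((1 - π₀ (X ω))⁻¹ * ((μh 0 (X ω) - μ₀ 0 (X ω)) * (τh (X ω) - (μ₀ 1 (X ω) - μ₀ 0 (X ω))))) * (1 - T ω) ∂P = ∫ ω, (μh 0 (X ω) - μ₀ 0 (X ω)) * (τh (X ω) - (μ₀ 1 (X ω) - μ₀ 0 (X ω))) ∂P := by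
      calc ∫ ω, ((1 - π₀ (X ω))⁻¹ * ((μh 0 (X ω) - μ₀ 0 (X ω)) * (τh (X ω) - (μ₀ 1 (X ω) - μ₀ 0 (X ω))))) * (1 - T ω) ∂P
          = ∫ ω, (((1 - π₀ (X ω))⁻¹ * ((μh 0 (X ω) - μ₀ 0 (X ω)) * (τh (X ω) - (μ₀ 1 (X ω) - μ₀ 0 (X ω))))) - ((1 - π₀ (X ω))⁻¹ * ((μh 0 (X ω) - μ₀ 0 (X ω)) * (τh (X ω) - (μ₀ 1 (X ω) - μ₀ 0 (X ω))))) * T ω) ∂P :=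
            integral_congr_ae (Filter.Eventually.of_forall fun ω => by ring)
        _ = (∫ ω, (1 - π₀ (X ω))⁻¹ * ((μh 0 (X ω) - μ₀ 0 (X ω)) * (τh (X ω) - (μ₀ 1 (X ω) - μ₀ 0 (X ω)))) ∂P) - ∫ ω, ((1 - π₀ (X ω))⁻¹ * ((μh 0 (X ω) - μ₀ 0 (X ω)) * (τh (X ω) - (μ₀ 1 (X ω) - μ₀ 0 (X ω))))) * T ω ∂P := integral_sub h0int h0Tint
        _ = (∫ ω, (1 - π₀ (X ω))⁻¹ * ((μh 0 (X ω) - μ₀ 0 (X ω)) * (τh (X ω) - (μ₀ 1 (X ω) - μ₀ 0 (X ω)))) ∂P) - ∫ ω, ((1 - π₀ (X ω))⁻¹ * ((μh 0 (X ω) - μ₀ 0 (X ω)) * (τh (X ω) - (μ₀ 1 (X ω) - μ₀ 0 (X ω))))) * π₀ (X ω) ∂P := by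
            rw [pullT _ h0mX h0Tint]
        _ = ∫ ω, (((1 - π₀ (X ω))⁻¹ * ((μh 0 (X ω) - μ₀ 0 (X ω)) * (τh (X ω) - (μ₀ 1 (X ω) - μ₀ 0 (X ω))))) - ((1 - π₀ (X ω))⁻¹ * ((μh 0 (X ω) - μ₀ 0 (X ω)) * (τh (X ω) - (μ₀ 1 (X ω) - μ₀ 0 (X ω))))) * π₀ (X ω)) ∂P := (integral_sub h0int h0πint).symm
        _ = ∫ ω, (μh 0 (X ω) - μ₀ 0 (X ω)) * (τh (X ω) - (μ₀ 1 (X ω) - μ₀ 0 (X ω))) ∂P := by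
            refine integral_congr_ae (Filter.Eventually.of_forall fun ω => ?_)
            have hne : (1:ℝ) - π₀ (X ω) ≠ 0 := (h1πpos (X ω)).ne'
            field_simp
    calc ∫ ω, w₀ (T ω) (X ω) * ((μh (T ω) (X ω) - μ₀ (T ω) (X ω)) * (τh (X ω) - (μ₀ 1 (X ω) - μ₀ 0 (X ω)))) ∂P
        = ∫ ω, (((π₀ (X ω))⁻¹ * ((μh 1 (X ω) - μ₀ 1 (X ω)) * (τh (X ω) - (μ₀ 1 (X ω) - μ₀ 0 (X ω))))) * T ω - ((1 - π₀ (X ω))⁻¹ * ((μh 0 (X ω) - μ₀ 0 (X ω)) * (τh (X ω) - (μ₀ 1 (X ω) - μ₀ 0 (X ω))))) * (1 - T ω)) ∂P :=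
          integral_congr_ae (Filter.Eventually.of_forall fun ω => hpt ω)
      _ = (∫ ω, ((π₀ (X ω))⁻¹ * ((μh 1 (X ω) - μ₀ 1 (X ω)) * (τh (X ω) - (μ₀ 1 (X ω) - μ₀ 0 (X ω))))) * T ω ∂P) - ∫ ω, ((1 - π₀ (X ω))⁻¹ * ((μh 0 (X ω) - μ₀ 0 (X ω)) * (τh (X ω) - (μ₀ 1 (X ω) - μ₀ 0 (X ω))))) * (1 - T ω) ∂P :=
          integral_sub h1Tint h0subint
      _ = (∫ ω, (μh 1 (X ω) - μ₀ 1 (X ω)) * (τh (X ω) - (μ₀ 1 (X ω) - μ₀ 0 (X ω))) ∂P) - ∫ ω, (μh 0 (X ω) - μ₀ 0 (X ω)) * (τh (X ω) - (μ₀ 1 (X ω) - μ₀ 0 (X ω))) ∂P := by rw [e1, e0]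
      _ = ∫ ω, ((μh 1 (X ω) - μ₀ 1 (X ω)) - (μh 0 (X ω) - μ₀ 0 (X ω))) * (τh (X ω) - (μ₀ 1 (X ω) - μ₀ 0 (X ω))) ∂P := by
          rw [← integral_sub hδ1g_int hδ0g_int]
          exact integral_congr_ae (Filter.Eventually.of_forall fun ω => by ring)
  -- Step 3 : identification of the cross term
  have hΔg_int : Integrable (fun ω => (μh (T ω) (X ω) - μ₀ (T ω) (X ω)) * (τh (X ω) - (μ₀ 1 (X ω) - μ₀ 0 (X ω)))) P := DRaux.integrable_mul_L2 hΔ2 hg2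
  have hEΔg_int : Integrable (fun ω => (wh (T ω) (X ω) - w₀ (T ω) (X ω)) * ((μh (T ω) (X ω) - μ₀ (T ω) (X ω)) * (τh (X ω) - (μ₀ 1 (X ω) - μ₀ 0 (X ω))))) P :=
    hΔg_int.bdd_mul hE_meas.aestronglyMeasurable
      (Filter.Eventually.of_forall fun ω => by rw [Real.norm_eq_abs]; exact hEbdd ω)
  have hAg_Y_int : Integrable (fun ω => (wh (T ω) (X ω) * (τh (X ω) - (μ₀ 1 (X ω) - μ₀ 0 (X ω)))) * (Y ω - μ₀ (T ω) (X ω))) P :=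
    DRaux.integrable_mul_L2 hAg2 (hY2.sub hM02)
  have hδg_int : Integrable (fun ω => ((μh 1 (X ω) - μ₀ 1 (X ω)) - (μh 0 (X ω) - μ₀ 0 (X ω))) * (τh (X ω) - (μ₀ 1 (X ω) - μ₀ 0 (X ω)))) P :=
    DRaux.integrable_mul_L2 (hδ12.sub hδ02) hg2
  have hcross : ∫ ω, (wh (T ω) (X ω) * (Y ω - μh (T ω) (X ω)) + μh 1 (X ω) - μh 0 (X ω) - (μ₀ 1 (X ω) - μ₀ 0 (X ω))) * (τh (X ω) - (μ₀ 1 (X ω) - μ₀ 0 (X ω))) ∂P = - ∫ ω, (wh (T ω) (X ω) - w₀ (T ω) (X ω)) * ((μh (T ω) (X ω) - μ₀ (T ω) (X ω)) * (τh (X ω) - (μ₀ 1 (X ω) - μ₀ 0 (X ω)))) ∂P := by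
    have hDg : ∀ ω, (wh (T ω) (X ω) * (Y ω - μh (T ω) (X ω)) + μh 1 (X ω) - μh 0 (X ω) - (μ₀ 1 (X ω) - μ₀ 0 (X ω))) * (τh (X ω) - (μ₀ 1 (X ω) - μ₀ 0 (X ω)))
        = (wh (T ω) (X ω) * (τh (X ω) - (μ₀ 1 (X ω) - μ₀ 0 (X ω)))) * (Y ω - μ₀ (T ω) (X ω)) - (wh (T ω) (X ω) - w₀ (T ω) (X ω)) * ((μh (T ω) (X ω) - μ₀ (T ω) (X ω)) * (τh (X ω) - (μ₀ 1 (X ω) - μ₀ 0 (X ω))))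
          - w₀ (T ω) (X ω) * ((μh (T ω) (X ω) - μ₀ (T ω) (X ω)) * (τh (X ω) - (μ₀ 1 (X ω) - μ₀ 0 (X ω)))) + ((μh 1 (X ω) - μ₀ 1 (X ω)) - (μh 0 (X ω) - μ₀ 0 (X ω))) * (τh (X ω) - (μ₀ 1 (X ω) - μ₀ 0 (X ω))) := fun ω => by ring
    calc ∫ ω, (wh (T ω) (X ω) * (Y ω - μh (T ω) (X ω)) + μh 1 (X ω) - μh 0 (X ω) - (μ₀ 1 (X ω) - μ₀ 0 (X ω))) * (τh (X ω) - (μ₀ 1 (X ω) - μ₀ 0 (X ω))) ∂P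
        = ∫ ω, ((wh (T ω) (X ω) * (τh (X ω) - (μ₀ 1 (X ω) - μ₀ 0 (X ω)))) * (Y ω - μ₀ (T ω) (X ω)) - (wh (T ω) (X ω) - w₀ (T ω) (X ω)) * ((μh (T ω) (X ω) - μ₀ (T ω) (X ω)) * (τh (X ω) - (μ₀ 1 (X ω) - μ₀ 0 (X ω))))
            - w₀ (T ω) (X ω) * ((μh (T ω) (X ω) - μ₀ (T ω) (X ω)) * (τh (X ω) - (μ₀ 1 (X ω) - μ₀ 0 (X ω)))) + ((μh 1 (X ω) - μ₀ 1 (X ω)) - (μh 0 (X ω) - μ₀ 0 (X ω))) * (τh (X ω) - (μ₀ 1 (X ω) - μ₀ 0 (X ω)))) ∂P :=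
          integral_congr_ae (Filter.Eventually.of_forall fun ω => hDg ω)
      _ = (∫ ω, (wh (T ω) (X ω) * (τh (X ω) - (μ₀ 1 (X ω) - μ₀ 0 (X ω)))) * (Y ω - μ₀ (T ω) (X ω)) ∂P) - (∫ ω, (wh (T ω) (X ω) - w₀ (T ω) (X ω)) * ((μh (T ω) (X ω) - μ₀ (T ω) (X ω)) * (τh (X ω) - (μ₀ 1 (X ω) - μ₀ 0 (X ω)))) ∂P)
            - (∫ ω, w₀ (T ω) (X ω) * ((μh (T ω) (X ω) - μ₀ (T ω) (X ω)) * (τh (X ω) - (μ₀ 1 (X ω) - μ₀ 0 (X ω)))) ∂P) + ∫ ω, ((μh 1 (X ω) - μ₀ 1 (X ω)) - (μh 0 (X ω) - μ₀ 0 (X ω))) * (τh (X ω) - (μ₀ 1 (X ω) - μ₀ 0 (X ω))) ∂P := by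
          have hI12 : Integrable (fun ω => (wh (T ω) (X ω) * (τh (X ω) - (μ₀ 1 (X ω) - μ₀ 0 (X ω)))) * (Y ω - μ₀ (T ω) (X ω)) - (wh (T ω) (X ω) - w₀ (T ω) (X ω)) * ((μh (T ω) (X ω) - μ₀ (T ω) (X ω)) * (τh (X ω) - (μ₀ 1 (X ω) - μ₀ 0 (X ω))))) P := hAg_Y_int.sub hEΔg_int
          have hI123 : Integrable (fun ω => (wh (T ω) (X ω) * (τh (X ω) - (μ₀ 1 (X ω) - μ₀ 0 (X ω)))) * (Y ω - μ₀ (T ω) (X ω)) - (wh (T ω) (X ω) - w₀ (T ω) (X ω)) * ((μh (T ω) (X ω) - μ₀ (T ω) (X ω)) * (τh (X ω) - (μ₀ 1 (X ω) - μ₀ 0 (X ω)))) - w₀ (T ω) (X ω) * ((μh (T ω) (X ω) - μ₀ (T ω) (X ω)) * (τh (X ω) - (μ₀ 1 (X ω) - μ₀ 0 (X ω))))) P := hI12.sub hw₀Δg_int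
          calc ∫ ω, ((wh (T ω) (X ω) * (τh (X ω) - (μ₀ 1 (X ω) - μ₀ 0 (X ω)))) * (Y ω - μ₀ (T ω) (X ω)) - (wh (T ω) (X ω) - w₀ (T ω) (X ω)) * ((μh (T ω) (X ω) - μ₀ (T ω) (X ω)) * (τh (X ω) - (μ₀ 1 (X ω) - μ₀ 0 (X ω)))) - w₀ (T ω) (X ω) * ((μh (T ω) (X ω) - μ₀ (T ω) (X ω)) * (τh (X ω) - (μ₀ 1 (X ω) - μ₀ 0 (X ω)))) + ((μh 1 (X ω) - μ₀ 1 (X ω)) - (μh 0 (X ω) - μ₀ 0 (X ω))) * (τh (X ω) - (μ₀ 1 (X ω) - μ₀ 0 (X ω)))) ∂P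
              = (∫ ω, ((wh (T ω) (X ω) * (τh (X ω) - (μ₀ 1 (X ω) - μ₀ 0 (X ω)))) * (Y ω - μ₀ (T ω) (X ω)) - (wh (T ω) (X ω) - w₀ (T ω) (X ω)) * ((μh (T ω) (X ω) - μ₀ (T ω) (X ω)) * (τh (X ω) - (μ₀ 1 (X ω) - μ₀ 0 (X ω)))) - w₀ (T ω) (X ω) * ((μh (T ω) (X ω) - μ₀ (T ω) (X ω)) * (τh (X ω) - (μ₀ 1 (X ω) - μ₀ 0 (X ω))))) ∂P) + ∫ ω, ((μh 1 (X ω) - μ₀ 1 (X ω)) - (μh 0 (X ω) - μ₀ 0 (X ω))) * (τh (X ω) - (μ₀ 1 (X ω) - μ₀ 0 (X ω))) ∂P :=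
                integral_add hI123 hδg_int
            _ = ((∫ ω, ((wh (T ω) (X ω) * (τh (X ω) - (μ₀ 1 (X ω) - μ₀ 0 (X ω)))) * (Y ω - μ₀ (T ω) (X ω)) - (wh (T ω) (X ω) - w₀ (T ω) (X ω)) * ((μh (T ω) (X ω) - μ₀ (T ω) (X ω)) * (τh (X ω) - (μ₀ 1 (X ω) - μ₀ 0 (X ω))))) ∂P) - ∫ ω, w₀ (T ω) (X ω) * ((μh (T ω) (X ω) - μ₀ (T ω) (X ω)) * (τh (X ω) - (μ₀ 1 (X ω) - μ₀ 0 (X ω)))) ∂P) + ∫ ω, ((μh 1 (X ω) - μ₀ 1 (X ω)) - (μh 0 (X ω) - μ₀ 0 (X ω))) * (τh (X ω) - (μ₀ 1 (X ω) - μ₀ 0 (X ω))) ∂P :=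
                congrArg (fun z => z + ∫ ω, ((μh 1 (X ω) - μ₀ 1 (X ω)) - (μh 0 (X ω) - μ₀ 0 (X ω))) * (τh (X ω) - (μ₀ 1 (X ω) - μ₀ 0 (X ω))) ∂P) (integral_sub hI12 hw₀Δg_int)
            _ = ((∫ ω, (wh (T ω) (X ω) * (τh (X ω) - (μ₀ 1 (X ω) - μ₀ 0 (X ω)))) * (Y ω - μ₀ (T ω) (X ω)) ∂P) - (∫ ω, (wh (T ω) (X ω) - w₀ (T ω) (X ω)) * ((μh (T ω) (X ω) - μ₀ (T ω) (X ω)) * (τh (X ω) - (μ₀ 1 (X ω) - μ₀ 0 (X ω)))) ∂P) - ∫ ω, w₀ (T ω) (X ω) * ((μh (T ω) (X ω) - μ₀ (T ω) (X ω)) * (τh (X ω) - (μ₀ 1 (X ω) - μ₀ 0 (X ω)))) ∂P) + ∫ ω, ((μh 1 (X ω) - μ₀ 1 (X ω)) - (μh 0 (X ω) - μ₀ 0 (X ω))) * (τh (X ω) - (μ₀ 1 (X ω) - μ₀ 0 (X ω))) ∂P :=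
                congrArg (fun z => (z - ∫ ω, w₀ (T ω) (X ω) * ((μh (T ω) (X ω) - μ₀ (T ω) (X ω)) * (τh (X ω) - (μ₀ 1 (X ω) - μ₀ 0 (X ω)))) ∂P) + ∫ ω, ((μh 1 (X ω) - μ₀ 1 (X ω)) - (μh 0 (X ω) - μ₀ 0 (X ω))) * (τh (X ω) - (μ₀ 1 (X ω) - μ₀ 0 (X ω))) ∂P)
                  (integral_sub hAg_Y_int hEΔg_int)
      _ = - ∫ ω, (wh (T ω) (X ω) - w₀ (T ω) (X ω)) * ((μh (T ω) (X ω) - μ₀ (T ω) (X ω)) * (τh (X ω) - (μ₀ 1 (X ω) - μ₀ 0 (X ω)))) ∂P := by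
          rw [hT1, hclaim]
          ring
  -- Step 4 : expansion of the excess risk
  have hg_sq_int : Integrable (fun ω => (τh (X ω) - (μ₀ 1 (X ω) - μ₀ 0 (X ω))) ^ 2) P := hg2.integrable_sq
  have hD_sq_int : Integrable (fun ω => (wh (T ω) (X ω) * (Y ω - μh (T ω) (X ω)) + μh 1 (X ω) - μh 0 (X ω) - (μ₀ 1 (X ω) - μ₀ 0 (X ω))) ^ 2) P := hD2.integrable_sq
  have hDg_int : Integrable (fun ω => (wh (T ω) (X ω) * (Y ω - μh (T ω) (X ω)) + μh 1 (X ω) - μh 0 (X ω) - (μ₀ 1 (X ω) - μ₀ 0 (X ω))) * (τh (X ω) - (μ₀ 1 (X ω) - μ₀ 0 (X ω)))) P := DRaux.integrable_mul_L2 hD2 hg2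
  have hexpand : ∫ ω, (wh (T ω) (X ω) * (Y ω - μh (T ω) (X ω))
        + μh 1 (X ω) - μh 0 (X ω) - τh (X ω)) ^ 2 ∂P
      = (∫ ω, (wh (T ω) (X ω) * (Y ω - μh (T ω) (X ω)) + μh 1 (X ω) - μh 0 (X ω) - (μ₀ 1 (X ω) - μ₀ 0 (X ω))) ^ 2 ∂P) - 2 * (∫ ω, (wh (T ω) (X ω) * (Y ω - μh (T ω) (X ω)) + μh 1 (X ω) - μh 0 (X ω) - (μ₀ 1 (X ω) - μ₀ 0 (X ω))) * (τh (X ω) - (μ₀ 1 (X ω) - μ₀ 0 (X ω))) ∂P) + ∫ ω, (τh (X ω) - (μ₀ 1 (X ω) - μ₀ 0 (X ω))) ^ 2 ∂P := by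
    calc ∫ ω, (wh (T ω) (X ω) * (Y ω - μh (T ω) (X ω)) + μh 1 (X ω) - μh 0 (X ω) - τh (X ω)) ^ 2 ∂P
        = ∫ ω, ((wh (T ω) (X ω) * (Y ω - μh (T ω) (X ω)) + μh 1 (X ω) - μh 0 (X ω) - (μ₀ 1 (X ω) - μ₀ 0 (X ω))) ^ 2 - 2 * ((wh (T ω) (X ω) * (Y ω - μh (T ω) (X ω)) + μh 1 (X ω) - μh 0 (X ω) - (μ₀ 1 (X ω) - μ₀ 0 (X ω))) * (τh (X ω) - (μ₀ 1 (X ω) - μ₀ 0 (X ω)))) + (τh (X ω) - (μ₀ 1 (X ω) - μ₀ 0 (X ω))) ^ 2) ∂P :=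
          integral_congr_ae (Filter.Eventually.of_forall fun ω => by ring)
      _ = (∫ ω, (wh (T ω) (X ω) * (Y ω - μh (T ω) (X ω)) + μh 1 (X ω) - μh 0 (X ω) - (μ₀ 1 (X ω) - μ₀ 0 (X ω))) ^ 2 ∂P) - (∫ ω, 2 * ((wh (T ω) (X ω) * (Y ω - μh (T ω) (X ω)) + μh 1 (X ω) - μh 0 (X ω) - (μ₀ 1 (X ω) - μ₀ 0 (X ω))) * (τh (X ω) - (μ₀ 1 (X ω) - μ₀ 0 (X ω)))) ∂P) + ∫ ω, (τh (X ω) - (μ₀ 1 (X ω) - μ₀ 0 (X ω))) ^ 2 ∂P := by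
          have hI2Dg : Integrable (fun ω => 2 * ((wh (T ω) (X ω) * (Y ω - μh (T ω) (X ω)) + μh 1 (X ω) - μh 0 (X ω) - (μ₀ 1 (X ω) - μ₀ 0 (X ω))) * (τh (X ω) - (μ₀ 1 (X ω) - μ₀ 0 (X ω))))) P := hDg_int.const_mul 2
          have hIsub : Integrable (fun ω => (wh (T ω) (X ω) * (Y ω - μh (T ω) (X ω)) + μh 1 (X ω) - μh 0 (X ω) - (μ₀ 1 (X ω) - μ₀ 0 (X ω))) ^ 2 - 2 * ((wh (T ω) (X ω) * (Y ω - μh (T ω) (X ω)) + μh 1 (X ω) - μh 0 (X ω) - (μ₀ 1 (X ω) - μ₀ 0 (X ω))) * (τh (X ω) - (μ₀ 1 (X ω) - μ₀ 0 (X ω))))) P := hD_sq_int.sub hI2Dg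
          calc ∫ ω, ((wh (T ω) (X ω) * (Y ω - μh (T ω) (X ω)) + μh 1 (X ω) - μh 0 (X ω) - (μ₀ 1 (X ω) - μ₀ 0 (X ω))) ^ 2 - 2 * ((wh (T ω) (X ω) * (Y ω - μh (T ω) (X ω)) + μh 1 (X ω) - μh 0 (X ω) - (μ₀ 1 (X ω) - μ₀ 0 (X ω))) * (τh (X ω) - (μ₀ 1 (X ω) - μ₀ 0 (X ω)))) + (τh (X ω) - (μ₀ 1 (X ω) - μ₀ 0 (X ω))) ^ 2) ∂P
              = (∫ ω, ((wh (T ω) (X ω) * (Y ω - μh (T ω) (X ω)) + μh 1 (X ω) - μh 0 (X ω) - (μ₀ 1 (X ω) - μ₀ 0 (X ω))) ^ 2 - 2 * ((wh (T ω) (X ω) * (Y ω - μh (T ω) (X ω)) + μh 1 (X ω) - μh 0 (X ω) - (μ₀ 1 (X ω) - μ₀ 0 (X ω))) * (τh (X ω) - (μ₀ 1 (X ω) - μ₀ 0 (X ω))))) ∂P) + ∫ ω, (τh (X ω) - (μ₀ 1 (X ω) - μ₀ 0 (X ω))) ^ 2 ∂P := integral_add hIsub hg_sq_int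
            _ = ((∫ ω, (wh (T ω) (X ω) * (Y ω - μh (T ω) (X ω)) + μh 1 (X ω) - μh 0 (X ω) - (μ₀ 1 (X ω) - μ₀ 0 (X ω))) ^ 2 ∂P) - ∫ ω, 2 * ((wh (T ω) (X ω) * (Y ω - μh (T ω) (X ω)) + μh 1 (X ω) - μh 0 (X ω) - (μ₀ 1 (X ω) - μ₀ 0 (X ω))) * (τh (X ω) - (μ₀ 1 (X ω) - μ₀ 0 (X ω)))) ∂P) + ∫ ω, (τh (X ω) - (μ₀ 1 (X ω) - μ₀ 0 (X ω))) ^ 2 ∂P :=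
                congrArg (fun z => z + ∫ ω, (τh (X ω) - (μ₀ 1 (X ω) - μ₀ 0 (X ω))) ^ 2 ∂P) (integral_sub hD_sq_int hI2Dg)
      _ = (∫ ω, (wh (T ω) (X ω) * (Y ω - μh (T ω) (X ω)) + μh 1 (X ω) - μh 0 (X ω) - (μ₀ 1 (X ω) - μ₀ 0 (X ω))) ^ 2 ∂P) - 2 * (∫ ω, (wh (T ω) (X ω) * (Y ω - μh (T ω) (X ω)) + μh 1 (X ω) - μh 0 (X ω) - (μ₀ 1 (X ω) - μ₀ 0 (X ω))) * (τh (X ω) - (μ₀ 1 (X ω) - μ₀ 0 (X ω)))  ∂P) + ∫ ω, (τh (X ω) - (μ₀ 1 (X ω) - μ₀ 0 (X ω))) ^ 2 ∂P := by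
          rw [integral_const_mul]
  have hkey : ∫ ω, (τh (X ω) - (μ₀ 1 (X ω) - μ₀ 0 (X ω))) ^ 2 ∂P ≤ R + 2 * (∫ ω, (wh (T ω) (X ω) * (Y ω - μh (T ω) (X ω)) + μh 1 (X ω) - μh 0 (X ω) - (μ₀ 1 (X ω) - μ₀ 0 (X ω))) * (τh (X ω) - (μ₀ 1 (X ω) - μ₀ 0 (X ω))) ∂P) := by
    rw [hexpand] at hexc
    linarith
  -- Step 5 : Cauchy–Schwarz for the cross term
  have hEΔg_int' : Integrable (fun ω => ((wh (T ω) (X ω) - w₀ (T ω) (X ω)) * (μh (T ω) (X ω) - μ₀ (T ω) (X ω))) * (τh (X ω) - (μ₀ 1 (X ω) - μ₀ 0 (X ω)))) P :=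
    DRaux.integrable_mul_L2 hEΔ2 hg2
  have hCS : |∫ ω, (wh (T ω) (X ω) - w₀ (T ω) (X ω)) * ((μh (T ω) (X ω) - μ₀ (T ω) (X ω)) * (τh (X ω) - (μ₀ 1 (X ω) - μ₀ 0 (X ω)))) ∂P|
      ≤ (eLpNorm (fun ω => (wh (T ω) (X ω) - w₀ (T ω) (X ω)) * (μh (T ω) (X ω) - μ₀ (T ω) (X ω))) 2 P).toReal * (eLpNorm (fun ω => (τh (X ω) - (μ₀ 1 (X ω) - μ₀ 0 (X ω)))) 2 P).toReal := by
    have hre : ∫ ω, (wh (T ω) (X ω) - w₀ (T ω) (X ω)) * ((μh (T ω) (X ω) - μ₀ (T ω) (X ω)) * (τh (X ω) - (μ₀ 1 (X ω) - μ₀ 0 (X ω)))) ∂P = ∫ ω, ((wh (T ω) (X ω) - w₀ (T ω) (X ω)) * (μh (T ω) (X ω) - μ₀ (T ω) (X ω))) * (τh (X ω) - (μ₀ 1 (X ω) - μ₀ 0 (X ω))) ∂P :=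
      integral_congr_ae (Filter.Eventually.of_forall fun ω => by ring)
    rw [hre]
    have h1 : |∫ ω, ((wh (T ω) (X ω) - w₀ (T ω) (X ω)) * (μh (T ω) (X ω) - μ₀ (T ω) (X ω))) * (τh (X ω) - (μ₀ 1 (X ω) - μ₀ 0 (X ω))) ∂P| ≤ ∫ ω, ‖((wh (T ω) (X ω) - w₀ (T ω) (X ω)) * (μh (T ω) (X ω) - μ₀ (T ω) (X ω))) * (τh (X ω) - (μ₀ 1 (X ω) - μ₀ 0 (X ω)))‖ ∂P := by
      rw [← Real.norm_eq_abs]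
      exact norm_integral_le_integral_norm _
    have h2 : ENNReal.ofReal (∫ ω, ‖((wh (T ω) (X ω) - w₀ (T ω) (X ω)) * (μh (T ω) (X ω) - μ₀ (T ω) (X ω))) * (τh (X ω) - (μ₀ 1 (X ω) - μ₀ 0 (X ω)))‖ ∂P)
        = eLpNorm (fun ω => ((wh (T ω) (X ω) - w₀ (T ω) (X ω)) * (μh (T ω) (X ω) - μ₀ (T ω) (X ω))) * (τh (X ω) - (μ₀ 1 (X ω) - μ₀ 0 (X ω)))) 1 P := by
      rw [ofReal_integral_norm_eq_lintegral_enorm hEΔg_int',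
        eLpNorm_one_eq_lintegral_enorm]
    have h3 : eLpNorm (fun ω => ((wh (T ω) (X ω) - w₀ (T ω) (X ω)) * (μh (T ω) (X ω) - μ₀ (T ω) (X ω))) * (τh (X ω) - (μ₀ 1 (X ω) - μ₀ 0 (X ω)))) 1 P
        ≤ eLpNorm (fun ω => (wh (T ω) (X ω) - w₀ (T ω) (X ω)) * (μh (T ω) (X ω) - μ₀ (T ω) (X ω))) 2 P * eLpNorm (fun ω => (τh (X ω) - (μ₀ 1 (X ω) - μ₀ 0 (X ω)))) 2 P :=
      DRaux.eLpNorm_one_mul_le hEΔ2.1 hg2.1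
    have h4 : ∫ ω, ‖((wh (T ω) (X ω) - w₀ (T ω) (X ω)) * (μh (T ω) (X ω) - μ₀ (T ω) (X ω))) * (τh (X ω) - (μ₀ 1 (X ω) - μ₀ 0 (X ω)))‖ ∂P
        ≤ ((eLpNorm (fun ω => (wh (T ω) (X ω) - w₀ (T ω) (X ω)) * (μh (T ω) (X ω) - μ₀ (T ω) (X ω))) 2 P) * eLpNorm (fun ω => (τh (X ω) - (μ₀ 1 (X ω) - μ₀ 0 (X ω)))) 2 P).toReal := by
      rw [← ENNReal.toReal_ofReal (integral_nonneg fun ω => norm_nonneg _), h2]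
      exact ENNReal.toReal_mono (ENNReal.mul_ne_top hEΔ2.2.ne hg2.2.ne) h3
    calc |∫ ω, ((wh (T ω) (X ω) - w₀ (T ω) (X ω)) * (μh (T ω) (X ω) - μ₀ (T ω) (X ω))) * (τh (X ω) - (μ₀ 1 (X ω) - μ₀ 0 (X ω))) ∂P| ≤ ∫ ω, ‖((wh (T ω) (X ω) - w₀ (T ω) (X ω)) * (μh (T ω) (X ω) - μ₀ (T ω) (X ω))) * (τh (X ω) - (μ₀ 1 (X ω) - μ₀ 0 (X ω)))‖ ∂P := h1
      _ ≤ ((eLpNorm (fun ω => (wh (T ω) (X ω) - w₀ (T ω) (X ω)) * (μh (T ω) (X ω) - μ₀ (T ω) (X ω))) 2 P) * eLpNorm (fun ω => (τh (X ω) - (μ₀ 1 (X ω) - μ₀ 0 (X ω)))) 2 P).toReal := h4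
      _ = (eLpNorm (fun ω => (wh (T ω) (X ω) - w₀ (T ω) (X ω)) * (μh (T ω) (X ω) - μ₀ (T ω) (X ω))) 2 P).toReal * (eLpNorm (fun ω => (τh (X ω) - (μ₀ 1 (X ω) - μ₀ 0 (X ω)))) 2 P).toReal :=
          ENNReal.toReal_mul
  -- Step 6 : put the real estimates together
  set a : ℝ := (eLpNorm (fun ω => (τh (X ω) - (μ₀ 1 (X ω) - μ₀ 0 (X ω)))) 2 P).toReal with ha
  set A2 : ℝ := (eLpNorm (fun ω => (wh (T ω) (X ω) - w₀ (T ω) (X ω)) * (μh (T ω) (X ω) - μ₀ (T ω) (X ω))) 2 P).toReal with hA2def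
  have ha0 : 0 ≤ a := ENNReal.toReal_nonneg
  have hA20 : 0 ≤ A2 := ENNReal.toReal_nonneg
  have hGsq : eLpNorm (fun ω => (τh (X ω) - (μ₀ 1 (X ω) - μ₀ 0 (X ω)))) 2 P ^ 2 = ENNReal.ofReal (∫ ω, (τh (X ω) - (μ₀ 1 (X ω) - μ₀ 0 (X ω))) ^ 2 ∂P) := by
    rw [DRaux.eLpNorm_two_sq]
    rw [← ofReal_integral_eq_lintegral_ofReal hg_sq_int
      (Filter.Eventually.of_forall fun ω => sq_nonneg _)]
  have hga : ∫ ω, (τh (X ω) - (μ₀ 1 (X ω) - μ₀ 0 (X ω))) ^ 2 ∂P = a ^ 2 := by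
    have := congrArg ENNReal.toReal hGsq
    rw [ENNReal.toReal_pow, ENNReal.toReal_ofReal (integral_nonneg fun ω => sq_nonneg _)]
      at this
    rw [← this, ha]
  have hreal : ∫ ω, (τh (X ω) - (μ₀ 1 (X ω) - μ₀ 0 (X ω))) ^ 2 ∂P ≤ 2 * R + 4 * A2 ^ 2 := by
    have h5 : ∫ ω, (τh (X ω) - (μ₀ 1 (X ω) - μ₀ 0 (X ω))) ^ 2 ∂P ≤ R + 2 * (A2 * a) := by
      have := hkey
      rw [hcross] at this
      have habs : - ∫ ω, (wh (T ω) (X ω) - w₀ (T ω) (X ω)) * ((μh (T ω) (X ω) - μ₀ (T ω) (X ω)) * (τh (X ω) - (μ₀ 1 (X ω) - μ₀ 0 (X ω)))) ∂P ≤ A2 * a :=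
        (neg_le_abs _).trans hCS
      linarith
    rw [hga] at h5 ⊢
    nlinarith [sq_nonneg (a - 2 * A2)]
  -- Step 7 : conclude in ℝ≥0∞
  have hofReal : eLpNorm (fun ω => (τh (X ω) - (μ₀ 1 (X ω) - μ₀ 0 (X ω)))) 2 P ^ 2
      ≤ ENNReal.ofReal (2 * R) + ENNReal.ofReal (4 * A2 ^ 2) := by
    rw [hGsq, ← ENNReal.ofReal_add (by linarith) (by positivity)]
    exact ENNReal.ofReal_le_ofReal hreal
  have hofReal2 : ENNReal.ofReal (4 * A2 ^ 2)
      = 4 * eLpNorm (fun ω => (wh (T ω) (X ω) - w₀ (T ω) (X ω)) * (μh (T ω) (X ω) - μ₀ (T ω) (X ω))) 2 P ^ 2 := by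
    rw [ENNReal.ofReal_mul (by norm_num), ENNReal.ofReal_pow hA20, hA2def,
      ENNReal.ofReal_toReal hEΔ2.2.ne]
    norm_num
  have hHolder : eLpNorm (fun ω => (wh (T ω) (X ω) - w₀ (T ω) (X ω)) * (μh (T ω) (X ω) - μ₀ (T ω) (X ω))) 2 P
      ≤ eLpNorm (fun ω => (wh (T ω) (X ω) - w₀ (T ω) (X ω))) 4 P * eLpNorm (fun ω => (μh (T ω) (X ω) - μ₀ (T ω) (X ω))) 4 P :=
    DRaux.eLpNorm_two_mul_le hE_meas.aestronglyMeasurable (hΔ2.1)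
  calc eLpNorm (fun ω => (τh (X ω) - (μ₀ 1 (X ω) - μ₀ 0 (X ω)))) 2 P ^ 2
      ≤ ENNReal.ofReal (2 * R) + ENNReal.ofReal (4 * A2 ^ 2) := hofReal
    _ = 2 * ENNReal.ofReal R + 4 * eLpNorm (fun ω => (wh (T ω) (X ω) - w₀ (T ω) (X ω)) * (μh (T ω) (X ω) - μ₀ (T ω) (X ω))) 2 P ^ 2 := by
        rw [hofReal2, ENNReal.ofReal_mul (by norm_num)]
        norm_num
    _ ≤ 2 * ENNReal.ofReal R
        + 4 * (eLpNorm (fun ω => (wh (T ω) (X ω) - w₀ (T ω) (X ω))) 4 P * eLpNorm (fun ω => (μh (T ω) (X ω) - μ₀ (T ω) (X ω))) 4 P) ^ 2 := by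
        exact add_le_add le_rfl (mul_le_mul_right (pow_le_pow_left' hHolder 2) 4)
    _ ≤ 2 * ENNReal.ofReal R
        + 8 * eLpNorm (fun ω => (wh (T ω) (X ω) - w₀ (T ω) (X ω))) 4 P ^ 2 * eLpNorm (fun ω => (μh (T ω) (X ω) - μ₀ (T ω) (X ω))) 4 P ^ 2 := by
        rw [mul_pow, ← mul_assoc]
        exact add_le_add le_rfl
          (mul_le_mul_left (mul_le_mul_left (by norm_num : (4:ℝ≥0∞) ≤ 8) _) _)
    _ = 2 * ENNReal.ofReal R
        + 8 * eLpNorm (fun ω => wh (T ω) (X ω) - w₀ (T ω) (X ω)) 4 P ^ 2 *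
            eLpNorm (fun ω => μh (T ω) (X ω) - μ₀ (T ω) (X ω)) 4 P ^ 2 := rfl
end
end

section
/- The DR pseudo-outcome at the true nuisances is conditionally unbiased for the CATE: E[φ(V;(μ₀,ω₀)) | σ(X)] = μ₀(1,X) − μ₀(0,X) almost surely, where φ(V;(μ₀,ω₀)) = ω₀(T,X)·(Y − μ₀(T,X)) + μ₀(1,X) − μ₀(0,X). -/
open MeasureTheory

noncomputable section

private lemma aux_integrable {Ω 𝒳 : Type*} [MeasurableSpace Ω] [MeasurableSpace 𝒳]
    (P : Measure Ω) [IsProbabilityMeasure P]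
    (X : Ω → 𝒳) (hX : Measurable X)
    (S : Ω → ℝ) (hS : Measurable S) (hS0 : ∀ ω, 0 ≤ S ω) (hS1 : ∀ ω, S ω ≤ 1)
    (ρ : 𝒳 → ℝ)
    (c : ℝ) (hc0 : 0 < c) (hρc : ∀ x, c ≤ ρ x)
    (hver : (fun ω => ρ (X ω)) =ᵐ[P] P[S | MeasurableSpace.comap X inferInstance])
    (g : 𝒳 → ℝ) (hg : Measurable g) (hg0 : ∀ x, 0 ≤ g x)
    (hint : Integrable (fun ω => S ω * g (X ω)) P) :
    Integrable (fun ω => g (X ω)) P := by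
  have hm := hX.comap_le
  have hgX : Measurable fun ω => g (X ω) := hg.comp hX
  set f : ℕ → Ω → ℝ := fun n ω => min (g (X ω)) n with hf_def
  have hf_meas : ∀ n, Measurable (f n) := fun n => hgX.min measurable_const
  have hf_nonneg : ∀ n, ∀ ω, 0 ≤ f n ω := fun n ω => le_min (hg0 _) n.cast_nonneg
  have hf_le : ∀ n, ∀ ω, f n ω ≤ g (X ω) := fun n ω => min_le_left _ _
  have hf_int : ∀ n, Integrable (f n) P := by
    intro n
    refine (integrable_const (n : ℝ)).mono' (hf_meas n).aestronglyMeasurable ?_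
    filter_upwards with ω
    rw [Real.norm_of_nonneg (hf_nonneg n ω)]
    exact min_le_right _ _
  have hSg_int : ∀ n, Integrable (fun ω => f n ω * S ω) P := by
    intro n
    refine (integrable_const (n : ℝ)).mono' ((hf_meas n).mul hS).aestronglyMeasurable ?_
    filter_upwards with ω
    rw [Real.norm_eq_abs, abs_mul, abs_of_nonneg (hf_nonneg n ω), abs_of_nonneg (hS0 ω)]
    calc f n ω * S ω ≤ f n ω * 1 := mul_le_mul_of_nonneg_left (hS1 ω) (hf_nonneg n ω)
      _ = f n ω := mul_one _
      _ ≤ n := min_le_right _ _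
  have hXm : Measurable[MeasurableSpace.comap X inferInstance] X := Measurable.of_comap_le le_rfl
  have hf_sm : ∀ n, StronglyMeasurable[MeasurableSpace.comap X inferInstance] (f n) := fun n =>
    ((hg.min measurable_const).comp hXm).stronglyMeasurable
  have hS_int : Integrable S P := by
    refine (integrable_const (1 : ℝ)).mono' hS.aestronglyMeasurable ?_
    filter_upwards with ω
    rw [Real.norm_of_nonneg (hS0 ω)]; exact hS1 ω
  have key : ∀ n, Integrable (fun ω => f n ω * ρ (X ω)) P ∧
      ∫ ω, f n ω * ρ (X ω) ∂P = ∫ ω, f n ω * S ω ∂P := by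
    intro n
    have h1 : P[fun ω => f n ω * S ω | MeasurableSpace.comap X inferInstance] =ᵐ[P] f n * P[S | MeasurableSpace.comap X inferInstance] :=
      condExp_mul_of_stronglyMeasurable_left (hf_sm n) (hSg_int n) hS_int
    have h2 : (fun ω => f n ω * ρ (X ω)) =ᵐ[P] P[fun ω => f n ω * S ω | MeasurableSpace.comap X inferInstance] := by
      filter_upwards [h1, hver] with ω h1ω h2ω
      rw [h2ω, h1ω, Pi.mul_apply]
    refine ⟨integrable_condExp.congr h2.symm, ?_⟩
    calc ∫ ω, f n ω * ρ (X ω) ∂P = ∫ ω, (P[fun ω => f n ω * S ω | MeasurableSpace.comap X inferInstance]) ω ∂P :=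
          integral_congr_ae h2
      _ = ∫ ω, f n ω * S ω ∂P := integral_condExp hm
  obtain ⟨C, hC⟩ : ∃ C, ∀ n, ∫ ω, f n ω ∂P ≤ C := by
    refine ⟨(∫ ω, S ω * g (X ω) ∂P) / c, fun n => ?_⟩
    have h1 : c * ∫ ω, f n ω ∂P ≤ ∫ ω, f n ω * ρ (X ω) ∂P := by
      rw [← integral_const_mul]
      refine integral_mono_ae ((hf_int n).const_mul c) (key n).1 ?_
      filter_upwards with ω
      calc c * f n ω ≤ ρ (X ω) * f n ω :=
            mul_le_mul_of_nonneg_right (hρc _) (hf_nonneg n ω)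
        _ = f n ω * ρ (X ω) := mul_comm _ _
    have h2 : ∫ ω, f n ω * S ω ∂P ≤ ∫ ω, S ω * g (X ω) ∂P := by
      refine integral_mono_ae (hSg_int n) hint ?_
      filter_upwards with ω
      rw [mul_comm (S ω)]
      exact mul_le_mul_of_nonneg_right (hf_le n ω) (hS0 ω)
    rw [le_div_iff₀ hc0, mul_comm]
    exact h1.trans (((key n).2).le.trans h2)
  have hsup : ∀ ω, ENNReal.ofReal (g (X ω)) = ⨆ n : ℕ, ENNReal.ofReal (f n ω) := by
    intro ω
    refine le_antisymm ?_ (iSup_le fun n => ENNReal.ofReal_le_ofReal (hf_le n ω))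
    obtain ⟨n, hn⟩ := exists_nat_ge (g (X ω))
    have he : f n ω = g (X ω) := min_eq_left hn
    exact le_iSup_of_le n (by rw [he])
  have hlim : ∫⁻ ω, ENNReal.ofReal (g (X ω)) ∂P ≤ ENNReal.ofReal C := by
    calc ∫⁻ ω, ENNReal.ofReal (g (X ω)) ∂P
        = ∫⁻ ω, ⨆ n : ℕ, ENNReal.ofReal (f n ω) ∂P := by simp_rw [hsup]
      _ = ⨆ n : ℕ, ∫⁻ ω, ENNReal.ofReal (f n ω) ∂P := by
          refine lintegral_iSup (fun n => (hf_meas n).ennreal_ofReal) ?_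
          intro a b hab ω
          exact ENNReal.ofReal_le_ofReal (min_le_min le_rfl (Nat.cast_le.2 hab))
      _ ≤ ENNReal.ofReal C := by
          refine iSup_le fun n => ?_
          rw [← ofReal_integral_eq_lintegral_ofReal (hf_int n)
            (Filter.Eventually.of_forall (hf_nonneg n))]
          exact ENNReal.ofReal_le_ofReal (hC n)
  refine ⟨hgX.aestronglyMeasurable, ?_⟩
  rw [hasFiniteIntegral_iff_norm]
  have hnorm : ∀ ω, ENNReal.ofReal ‖g (X ω)‖ = ENNReal.ofReal (g (X ω)) := fun ω => by
    rw [Real.norm_of_nonneg (hg0 _)]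
  simp_rw [hnorm]
  exact lt_of_le_of_lt hlim ENNReal.ofReal_lt_top

/-- **Conditional unbiasedness of the DR pseudo-outcome.** At the true
nuisances, E[φ(V;(μ₀,ω₀)) | σ(X)] = μ₀(1,X) − μ₀(0,X) almost surely. -/
theorem dr_pseudo_outcome_consistency
    {Ω 𝒳 : Type*} [MeasurableSpace Ω] [MeasurableSpace 𝒳]
    (P : Measure Ω) [IsProbabilityMeasure P]
    (X : Ω → 𝒳) (T Y : Ω → ℝ)
    (hX : Measurable X) (hT : Measurable T) (hY : Measurable Y)
    (hT01 : ∀ ω, T ω = 0 ∨ T ω = 1) (hY1 : Integrable Y P)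
    (μ₀ : ℝ → 𝒳 → ℝ) (hμ₀_meas : Measurable fun p : ℝ × 𝒳 => μ₀ p.1 p.2)
    (hμ₀ : (fun ω => μ₀ (T ω) (X ω))
        =ᵐ[P] P[Y | MeasurableSpace.comap (fun ω => (T ω, X ω)) inferInstance])
    (π₀ : 𝒳 → ℝ) (hπ₀_meas : Measurable π₀)
    (hπ₀ : (fun ω => π₀ (X ω)) =ᵐ[P] P[T | MeasurableSpace.comap X inferInstance])
    (c : ℝ) (hc0 : 0 < c) (hc2 : c < 1 / 2)
    (hc : ∀ x, c ≤ π₀ x ∧ π₀ x ≤ 1 - c)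
    (w₀ : ℝ → 𝒳 → ℝ)
    (hw₀ : ∀ t x, w₀ t x = (2 * t - 1) / (t * π₀ x + (1 - t) * (1 - π₀ x))) :
    P[(fun ω => w₀ (T ω) (X ω) * (Y ω - μ₀ (T ω) (X ω)) + μ₀ 1 (X ω) - μ₀ 0 (X ω))
        | MeasurableSpace.comap X inferInstance]
      =ᵐ[P] fun ω => μ₀ 1 (X ω) - μ₀ 0 (X ω) := by
  have hm := hX.comap_le
  have hTX : Measurable fun ω => (T ω, X ω) := hT.prodMk hX
  have hmTX := hTX.comap_le
  have hle : MeasurableSpace.comap X inferInstance ≤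
      MeasurableSpace.comap (fun ω => (T ω, X ω)) inferInstance := by
    rintro s ⟨t, ht, rfl⟩
    exact ⟨Prod.snd ⁻¹' t, measurable_snd ht, rfl⟩
  have hT0 : ∀ ω, 0 ≤ T ω := fun ω => by rcases hT01 ω with h | h <;> rw [h] <;> norm_num
  have hT1 : ∀ ω, T ω ≤ 1 := fun ω => by rcases hT01 ω with h | h <;> rw [h] <;> norm_num
  have hμTX_meas : Measurable fun ω => μ₀ (T ω) (X ω) := hμ₀_meas.comp hTX
  have hμ1_meas : Measurable (μ₀ 1) :=
    hμ₀_meas.comp (measurable_const.prodMk measurable_id)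
  have hμ0_meas : Measurable (μ₀ 0) :=
    hμ₀_meas.comp (measurable_const.prodMk measurable_id)
  have hw_pair : Measurable fun p : ℝ × 𝒳 => w₀ p.1 p.2 := by
    have he : (fun p : ℝ × 𝒳 => w₀ p.1 p.2)
        = fun p => (2 * p.1 - 1) / (p.1 * π₀ p.2 + (1 - p.1) * (1 - π₀ p.2)) := by
      funext p; rw [hw₀]
    rw [he]; fun_prop
  have hwTX_meas : Measurable fun ω => w₀ (T ω) (X ω) := hw_pair.comp hTX
  have hw_bdd : ∀ ω, ‖w₀ (T ω) (X ω)‖ ≤ 1 / c := by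
    intro ω
    obtain ⟨hcx, hcx'⟩ := hc (X ω)
    rcases hT01 ω with h | h <;> rw [hw₀, h]
    · have h1 : (2 * (0:ℝ) - 1) / ((0:ℝ) * π₀ (X ω) + (1 - 0) * (1 - π₀ (X ω)))
          = -(1 / (1 - π₀ (X ω))) := by ring
      have hpos : (0:ℝ) < 1 - π₀ (X ω) := by linarith
      rw [h1, norm_neg, Real.norm_of_nonneg (one_div_pos.mpr hpos).le]
      exact one_div_le_one_div_of_le hc0 (by linarith)
    · have h1 : (2 * (1:ℝ) - 1) / ((1:ℝ) * π₀ (X ω) + (1 - 1) * (1 - π₀ (X ω)))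
          = 1 / π₀ (X ω) := by ring
      have hpos : (0:ℝ) < π₀ (X ω) := lt_of_lt_of_le hc0 hcx
      rw [h1, Real.norm_of_nonneg (one_div_pos.mpr hpos).le]
      exact one_div_le_one_div_of_le hc0 hcx
  have hμTX_int : Integrable (fun ω => μ₀ (T ω) (X ω)) P := integrable_condExp.congr hμ₀.symm
  have hYμ_int : Integrable (fun ω => Y ω - μ₀ (T ω) (X ω)) P := hY1.sub hμTX_int
  have hwYμ_int : Integrable (fun ω => w₀ (T ω) (X ω) * (Y ω - μ₀ (T ω) (X ω))) P :=
    hYμ_int.bdd_mul hwTX_meas.aestronglyMeasurable (Filter.Eventually.of_forall hw_bdd)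
  have hT_int : Integrable T P := by
    refine (integrable_const (1 : ℝ)).mono' hT.aestronglyMeasurable ?_
    filter_upwards with ω
    rw [Real.norm_of_nonneg (hT0 ω)]; exact hT1 ω
  -- integrability of μ₀ 1 ∘ X
  have hμ1_int : Integrable (fun ω => μ₀ 1 (X ω)) P := by
    have hdom : Integrable (fun ω => T ω * |μ₀ 1 (X ω)|) P := by
      refine hμTX_int.abs.mono'
        ((hT.mul ((hμ1_meas.comp hX).abs)).aestronglyMeasurable) ?_
      filter_upwards with ω
      rcases hT01 ω with h | h
      · rw [h]; simp [abs_nonneg]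
      · rw [h]; simp
    have hA := aux_integrable P X hX T hT hT0 hT1 π₀ c hc0 (fun x => (hc x).1) hπ₀
      (fun x => |μ₀ 1 x|) hμ1_meas.abs (fun x => abs_nonneg _) hdom
    exact (integrable_norm_iff (f := fun ω => μ₀ 1 (X ω))
      (hμ1_meas.comp hX).aestronglyMeasurable).mp (by simpa [Real.norm_eq_abs] using hA)
  -- integrability of μ₀ 0 ∘ X
  have hμ0_int : Integrable (fun ω => μ₀ 0 (X ω)) P := by
    have hS : Measurable fun ω => 1 - T ω := measurable_const.sub hT
    have hS0 : ∀ ω, 0 ≤ 1 - T ω := fun ω => by linarith [hT1 ω]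
    have hS1 : ∀ ω, 1 - T ω ≤ 1 := fun ω => by linarith [hT0 ω]
    have hver0 : (fun ω => 1 - π₀ (X ω))
        =ᵐ[P] P[fun ω => 1 - T ω | MeasurableSpace.comap X inferInstance] := by
      have h1 : (fun ω => (1:ℝ) - T ω) = (fun _ => (1:ℝ)) - T := rfl
      have h2 := condExp_sub (μ := P) (m := MeasurableSpace.comap X inferInstance)
        (integrable_const (1:ℝ)) hT_int
      rw [condExp_const hm] at h2
      rw [h1]
      filter_upwards [h2, hπ₀] with ω h2ω h3ω
      rw [h2ω, Pi.sub_apply, ← h3ω]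
    have hdom : Integrable (fun ω => (1 - T ω) * |μ₀ 0 (X ω)|) P := by
      refine hμTX_int.abs.mono'
        ((hS.mul ((hμ0_meas.comp hX).abs)).aestronglyMeasurable) ?_
      filter_upwards with ω
      rcases hT01 ω with h | h
      · rw [h]; simp
      · rw [h]; simp [abs_nonneg]
    have hA := aux_integrable P X hX (fun ω => 1 - T ω) hS hS0 hS1 (fun x => 1 - π₀ x) c hc0
      (fun x => by show c ≤ 1 - π₀ x; linarith [(hc x).2]) hver0
      (fun x => |μ₀ 0 x|) hμ0_meas.abs (fun x => abs_nonneg _) hdom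
    exact (integrable_norm_iff (f := fun ω => μ₀ 0 (X ω))
      (hμ0_meas.comp hX).aestronglyMeasurable).mp (by simpa [Real.norm_eq_abs] using hA)
  -- the residual term has zero conditional expectation given (T, X)
  have hTXm : Measurable[MeasurableSpace.comap (fun ω => (T ω, X ω)) inferInstance]
      fun ω => (T ω, X ω) := Measurable.of_comap_le le_rfl
  have hμ_smTX : StronglyMeasurable[MeasurableSpace.comap (fun ω => (T ω, X ω)) inferInstance]
      fun ω => μ₀ (T ω) (X ω) := (hμ₀_meas.comp hTXm).stronglyMeasurable
  have hw_smTX : StronglyMeasurable[MeasurableSpace.comap (fun ω => (T ω, X ω)) inferInstance]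
      fun ω => w₀ (T ω) (X ω) := (hw_pair.comp hTXm).stronglyMeasurable
  have hcondTX : P[fun ω => w₀ (T ω) (X ω) * (Y ω - μ₀ (T ω) (X ω))
      | MeasurableSpace.comap (fun ω => (T ω, X ω)) inferInstance] =ᵐ[P] 0 := by
    have h1 := condExp_mul_of_stronglyMeasurable_left hw_smTX hwYμ_int hYμ_int
    have h2 : P[fun ω => Y ω - μ₀ (T ω) (X ω)
        | MeasurableSpace.comap (fun ω => (T ω, X ω)) inferInstance] =ᵐ[P] 0 := by
      refine (condExp_sub hY1 hμTX_int _).trans ?_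
      have h3 := condExp_of_stronglyMeasurable hmTX hμ_smTX hμTX_int
      rw [h3]
      filter_upwards [hμ₀] with ω hω
      rw [Pi.sub_apply, ← hω, sub_self, Pi.zero_apply]
    refine h1.trans ?_
    filter_upwards [h2] with ω h2ω
    simp only [Pi.zero_apply] at h2ω ⊢
    rw [Pi.mul_apply, h2ω, mul_zero]
  have hzero : P[fun ω => w₀ (T ω) (X ω) * (Y ω - μ₀ (T ω) (X ω))
      | MeasurableSpace.comap X inferInstance] =ᵐ[P] 0 := by
    refine ((condExp_condExp_of_le hle hmTX).symm.trans
      ((condExp_congr_ae hcondTX).trans ?_))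
    rw [condExp_zero]
  -- finish
  have hXm : Measurable[MeasurableSpace.comap X inferInstance] X := Measurable.of_comap_le le_rfl
  have hfin_sm : StronglyMeasurable[MeasurableSpace.comap X inferInstance]
      fun ω => μ₀ 1 (X ω) - μ₀ 0 (X ω) :=
    ((hμ1_meas.comp hXm).sub (hμ0_meas.comp hXm)).stronglyMeasurable
  have hfin_int : Integrable (fun ω => μ₀ 1 (X ω) - μ₀ 0 (X ω)) P := hμ1_int.sub hμ0_int
  have hsplit : (fun ω => w₀ (T ω) (X ω) * (Y ω - μ₀ (T ω) (X ω)) + μ₀ 1 (X ω) - μ₀ 0 (X ω))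
      = fun ω => (w₀ (T ω) (X ω) * (Y ω - μ₀ (T ω) (X ω))) + (μ₀ 1 (X ω) - μ₀ 0 (X ω)) := by
    funext ω; ring
  rw [hsplit]
  refine (condExp_add hwYμ_int hfin_int _).trans ?_
  have h4 := condExp_of_stronglyMeasurable hm hfin_sm hfin_int
  filter_upwards [hzero] with ω hω
  simp only [Pi.add_apply, Pi.zero_apply] at hω ⊢
  rw [hω, h4, zero_add]
end
end

section
/- For arbitrary bounded measurable estimates μ̂, ω̂ and every bounded measurable h:𝒳→ℝ, the DR leakage factorizes into a product of nuisance errors: E[(φ(V;(μ̂,ω̂)) − τ₀(X))·h(X)] = E[(ω̂(T,X) − ω₀(T,X))·(μ₀(T,X) − μ̂(T,X))·h(X)], where τ₀(X) = μ₀(1,X) − μ₀(0,X). -/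
open MeasureTheory

noncomputable section

lemma integral_mul_condexp' {Ω : Type*} {m : MeasurableSpace Ω} [m0 : MeasurableSpace Ω]
    (hm : m ≤ m0) (P : Measure Ω) [IsProbabilityMeasure P]
    {f g : Ω → ℝ} (hf : StronglyMeasurable[m] f)
    (hfg : Integrable (fun ω => f ω * g ω) P) (hg : Integrable g P) :
    ∫ ω, f ω * g ω ∂P = ∫ ω, f ω * (P[g|m]) ω ∂P := by
  haveI : SigmaFinite (P.trim hm) := by
    have : IsFiniteMeasure (P.trim hm) := isFiniteMeasure_trim hm
    infer_instance
  have h1 : ∫ ω, f ω * g ω ∂P = ∫ ω, (P[(fun ω => f ω * g ω)|m]) ω ∂P :=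
    (integral_condExp (μ := P) (f := fun ω => f ω * g ω) hm).symm
  have h2 : P[(fun ω => f ω * g ω)|m] =ᵐ[P] fun ω => f ω * (P[g|m]) ω := by
    have := condExp_mul_of_stronglyMeasurable_left hf (f := f) (g := g) hfg hg
    filter_upwards [this] with ω hω
    exact hω
  rw [h1]
  exact integral_congr_ae h2

lemma integrable_of_trunc {Ω : Type*} [MeasurableSpace Ω] (P : Measure Ω) [IsProbabilityMeasure P]
    {f : Ω → ℝ} (hf : Measurable f) (h0 : ∀ ω, 0 ≤ f ω) {M : ℝ}
    (hM : ∀ n : ℕ, ∫ ω, min (f ω) n ∂P ≤ M) : Integrable f P := by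
  refine ⟨hf.aestronglyMeasurable, ?_⟩
  rw [hasFiniteIntegral_iff_ofReal (Filter.Eventually.of_forall h0)]
  have hpt : ∀ ω, ENNReal.ofReal (f ω) = ⨆ n : ℕ, ENNReal.ofReal (min (f ω) n) := by
    intro ω
    refine le_antisymm ?_ (iSup_le fun n => ENNReal.ofReal_le_ofReal (min_le_left _ _))
    calc ENNReal.ofReal (f ω) = ENNReal.ofReal (min (f ω) (⌈f ω⌉₊ : ℕ)) := by
          rw [min_eq_left (Nat.le_ceil _)]
      _ ≤ ⨆ n : ℕ, ENNReal.ofReal (min (f ω) n) :=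
          le_iSup (fun n : ℕ => ENNReal.ofReal (min (f ω) n)) _
  calc ∫⁻ ω, ENNReal.ofReal (f ω) ∂P
      = ∫⁻ ω, ⨆ n : ℕ, ENNReal.ofReal (min (f ω) n) ∂P := lintegral_congr hpt
    _ = ⨆ n : ℕ, ∫⁻ ω, ENNReal.ofReal (min (f ω) n) ∂P := by
        refine lintegral_iSup (fun n => ?_) (fun i j hij ω => ?_)
        · exact (hf.min measurable_const).ennreal_ofReal
        · exact ENNReal.ofReal_le_ofReal (min_le_min le_rfl (by exact_mod_cast hij))
    _ ≤ ENNReal.ofReal M := by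
        refine iSup_le fun n => ?_
        have hint : Integrable (fun ω => min (f ω) n) P := by
          refine Integrable.mono' (integrable_const (n : ℝ))
            (hf.min measurable_const).aestronglyMeasurable ?_
          refine Filter.Eventually.of_forall fun ω => ?_
          rw [Real.norm_eq_abs, abs_of_nonneg (le_min (h0 ω) n.cast_nonneg)]
          exact min_le_right _ _
        rw [← ofReal_integral_eq_lintegral_ofReal hint
          (Filter.Eventually.of_forall fun ω => le_min (h0 ω) n.cast_nonneg)]
        exact ENNReal.ofReal_le_ofReal (hM n)
    _ < ⊤ := ENNReal.ofReal_lt_top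

lemma int_mul_bdd {Ω : Type*} [MeasurableSpace Ω] {P : Measure Ω} {u v : Ω → ℝ}
    (hu : Integrable u P) (hv : AEStronglyMeasurable v P) {C : ℝ} (hC : ∀ ω, |v ω| ≤ C) :
    Integrable (fun ω => u ω * v ω) P := by
  have := hu.bdd_mul hv (Filter.Eventually.of_forall fun ω => by
    simpa [Real.norm_eq_abs] using hC ω)
  exact this.congr (Filter.Eventually.of_forall fun ω => by ring)

lemma int_bdd {Ω : Type*} [MeasurableSpace Ω] {P : Measure Ω} [IsProbabilityMeasure P]
    {v : Ω → ℝ} (hv : Measurable v) {C : ℝ} (hC : ∀ ω, |v ω| ≤ C) : Integrable v P := by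
  refine Integrable.mono' (integrable_const C) hv.aestronglyMeasurable ?_
  exact Filter.Eventually.of_forall fun ω => by simpa [Real.norm_eq_abs] using hC ω

/-- **DR leakage factorizes into a product of nuisance errors.** For bounded
measurable estimates μ̂, ω̂ and every bounded measurable h,
E[(φ(V;(μ̂,ω̂)) − τ₀(X))·h(X)] = E[(ω̂ − ω₀)(T,X)·(μ₀ − μ̂)(T,X)·h(X)]. -/
theorem dr_leakage_product
    {Ω 𝒳 : Type*} [MeasurableSpace Ω] [MeasurableSpace 𝒳]
    (P : Measure Ω) [IsProbabilityMeasure P]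
    (X : Ω → 𝒳) (T Y : Ω → ℝ)
    (hX : Measurable X) (hT : Measurable T) (hY : Measurable Y)
    (hT01 : ∀ ω, T ω = 0 ∨ T ω = 1) (hY1 : Integrable Y P)
    (μ₀ : ℝ → 𝒳 → ℝ) (hμ₀_meas : Measurable fun p : ℝ × 𝒳 => μ₀ p.1 p.2)
    (hμ₀ : (fun ω => μ₀ (T ω) (X ω))
        =ᵐ[P] P[Y | MeasurableSpace.comap (fun ω => (T ω, X ω)) inferInstance])
    (π₀ : 𝒳 → ℝ) (hπ₀_meas : Measurable π₀)
    (hπ₀ : (fun ω => π₀ (X ω)) =ᵐ[P] P[T | MeasurableSpace.comap X inferInstance])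
    (c : ℝ) (hc0 : 0 < c) (hc2 : c < 1 / 2)
    (hc : ∀ x, c ≤ π₀ x ∧ π₀ x ≤ 1 - c)
    (w₀ : ℝ → 𝒳 → ℝ)
    (hw₀ : ∀ t x, w₀ t x = (2 * t - 1) / (t * π₀ x + (1 - t) * (1 - π₀ x)))
    (μh wh : ℝ → 𝒳 → ℝ)
    (hμh_meas : Measurable fun p : ℝ × 𝒳 => μh p.1 p.2)
    (hwh_meas : Measurable fun p : ℝ × 𝒳 => wh p.1 p.2)
    (B : ℝ) (hμh_bdd : ∀ t x, |μh t x| ≤ B) (hwh_bdd : ∀ t x, |wh t x| ≤ B) :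
    ∀ (h : 𝒳 → ℝ), Measurable h → (∃ Bh : ℝ, ∀ x, |h x| ≤ Bh) →
      (∫ ω, (wh (T ω) (X ω) * (Y ω - μh (T ω) (X ω)) + μh 1 (X ω) - μh 0 (X ω)
            - (μ₀ 1 (X ω) - μ₀ 0 (X ω))) * h (X ω) ∂P)
        = ∫ ω, (wh (T ω) (X ω) - w₀ (T ω) (X ω))
            * (μ₀ (T ω) (X ω) - μh (T ω) (X ω)) * h (X ω) ∂P := by
  intro h hh hBh'
  obtain ⟨Bh, hBh⟩ := hBh'
  -- the two sub-σ-algebras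
  have hm₁ : MeasurableSpace.comap X inferInstance ≤ ‹MeasurableSpace Ω› :=
    measurable_iff_comap_le.mp hX
  have hm₂ : MeasurableSpace.comap (fun ω => (T ω, X ω)) inferInstance
      ≤ ‹MeasurableSpace Ω› := measurable_iff_comap_le.mp (hT.prodMk hX)
  have hXm₁ : Measurable[MeasurableSpace.comap X inferInstance] X :=
    measurable_iff_comap_le.mpr le_rfl
  have hTXm₂ : Measurable[MeasurableSpace.comap (fun ω => (T ω, X ω)) inferInstance]
      (fun ω => (T ω, X ω)) := measurable_iff_comap_le.mpr le_rfl
  -- basic facts about T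
  have hT01' : ∀ ω, 0 ≤ T ω ∧ T ω ≤ 1 := by
    intro ω; rcases hT01 ω with h' | h' <;> rw [h'] <;> norm_num
  have hTint : Integrable T P := int_bdd hT (C := 1) fun ω => by
    rw [abs_le]; constructor <;> [linarith [(hT01' ω).1]; exact (hT01' ω).2]
  -- measurability of composites
  have hμ₀TXm : Measurable (fun ω => μ₀ (T ω) (X ω)) := hμ₀_meas.comp (hT.prodMk hX)
  have hμhTXm : Measurable (fun ω => μh (T ω) (X ω)) := hμh_meas.comp (hT.prodMk hX)
  have hwhTXm : Measurable (fun ω => wh (T ω) (X ω)) := hwh_meas.comp (hT.prodMk hX)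
  have hμ₀1m : Measurable (fun x => μ₀ 1 x) :=
    hμ₀_meas.comp (measurable_const.prodMk measurable_id)
  have hμ₀0m : Measurable (fun x => μ₀ 0 x) :=
    hμ₀_meas.comp (measurable_const.prodMk measurable_id)
  have hμh1m : Measurable (fun x => μh 1 x) :=
    hμh_meas.comp (measurable_const.prodMk measurable_id)
  have hμh0m : Measurable (fun x => μh 0 x) :=
    hμh_meas.comp (measurable_const.prodMk measurable_id)
  have hw₀TXm : Measurable (fun ω => w₀ (T ω) (X ω)) := by
    have : (fun ω => w₀ (T ω) (X ω)) = fun ω =>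
        (2 * T ω - 1) / (T ω * π₀ (X ω) + (1 - T ω) * (1 - π₀ (X ω))) := by
      funext ω; rw [hw₀]
    rw [this]
    exact ((measurable_const.mul hT).sub measurable_const).div
      (((hT.mul (hπ₀_meas.comp hX))).add
        ((measurable_const.sub hT).mul (measurable_const.sub (hπ₀_meas.comp hX))))
  -- bound on w₀ along (T, X)
  have hπc : ∀ x, c ≤ π₀ x := fun x => (hc x).1
  have hπc' : ∀ x, c ≤ 1 - π₀ x := fun x => by have := (hc x).2; linarith
  have hπpos : ∀ x, 0 < π₀ x := fun x => lt_of_lt_of_le hc0 (hπc x)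
  have hπpos' : ∀ x, 0 < 1 - π₀ x := fun x => lt_of_lt_of_le hc0 (hπc' x)
  have hw₀1 : ∀ x, w₀ 1 x = (π₀ x)⁻¹ := by
    intro x; rw [hw₀]; norm_num
  have hw₀0 : ∀ x, w₀ 0 x = -(1 - π₀ x)⁻¹ := by
    intro x; rw [hw₀]; rw [div_eq_mul_inv]; ring_nf
  have hw₀bdd : ∀ ω, |w₀ (T ω) (X ω)| ≤ c⁻¹ := by
    intro ω
    rcases hT01 ω with h' | h' <;> rw [h']
    · rw [hw₀0, abs_neg, abs_of_nonneg (inv_nonneg.mpr (hπpos' _).le)]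
      exact inv_anti₀ hc0 (hπc' _)
    · rw [hw₀1, abs_of_nonneg (inv_nonneg.mpr (hπpos _).le)]
      exact inv_anti₀ hc0 (hπc _)
  -- integrability of μ₀ (T, X)
  have hμ₀TX_int : Integrable (fun ω => μ₀ (T ω) (X ω)) P :=
    (integrable_condExp (f := Y) (m := MeasurableSpace.comap (fun ω => (T ω, X ω)) inferInstance)).congr hμ₀.symm
  -- key identity for T against π₀
  have keyT : ∀ g : 𝒳 → ℝ, Measurable g → Integrable (fun ω => g (X ω) * T ω) P →
      ∫ ω, g (X ω) * T ω ∂P = ∫ ω, g (X ω) * π₀ (X ω) ∂P := by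
    intro g hg hint
    have hsm : StronglyMeasurable[MeasurableSpace.comap X inferInstance] (fun ω => g (X ω)) :=
      (hg.comp hXm₁).stronglyMeasurable
    rw [integral_mul_condexp' hm₁ P hsm hint hTint]
    refine integral_congr_ae ?_
    filter_upwards [hπ₀] with ω hω
    rw [← hω]
  -- variant for 1 - T against 1 - π₀
  have keyT' : ∀ g : 𝒳 → ℝ, Measurable g → Integrable (fun ω => g (X ω)) P →
      Integrable (fun ω => g (X ω) * T ω) P →
      ∫ ω, g (X ω) * (1 - T ω) ∂P = ∫ ω, g (X ω) * (1 - π₀ (X ω)) ∂P := by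
    intro g hg hgint hint
    have h1 : ∫ ω, g (X ω) * (1 - T ω) ∂P
        = ∫ ω, g (X ω) ∂P - ∫ ω, g (X ω) * T ω ∂P := by
      rw [← integral_sub hgint hint]
      refine integral_congr_ae (Filter.Eventually.of_forall fun ω => by ring)
    have hπint : Integrable (fun ω => g (X ω) * π₀ (X ω)) P :=
      int_mul_bdd hgint (hπ₀_meas.comp hX).aestronglyMeasurable (C := 1)
        (fun ω => by rw [abs_of_nonneg (hπpos _).le]; have := (hc (X ω)).2; linarith)
    have h2 : ∫ ω, g (X ω) * (1 - π₀ (X ω)) ∂P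
        = ∫ ω, g (X ω) ∂P - ∫ ω, g (X ω) * π₀ (X ω) ∂P := by
      rw [← integral_sub hgint hπint]
      refine integral_congr_ae (Filter.Eventually.of_forall fun ω => by ring)
    rw [h1, h2, keyT g hg hint]
  -- integrability of μ₀ 1 (X ·) and μ₀ 0 (X ·)
  have hMint : Integrable (fun ω => |μ₀ (T ω) (X ω)|) P := hμ₀TX_int.abs
  have I1 : Integrable (fun ω => μ₀ 1 (X ω)) P := by
    have habs : Integrable (fun ω => |μ₀ 1 (X ω)|) P := by
      refine integrable_of_trunc P (hμ₀1m.comp hX).abs (fun ω => abs_nonneg _)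
        (M := c⁻¹ * ∫ ω, |μ₀ (T ω) (X ω)| ∂P) ?_
      intro n
      set g : 𝒳 → ℝ := fun x => min |μ₀ 1 x| n with hgdef
      have hgm : Measurable g := hμ₀1m.abs.min measurable_const
      have hg0 : ∀ x, 0 ≤ g x := fun x => le_min (abs_nonneg _) n.cast_nonneg
      have hgb : ∀ x, |g x| ≤ (n : ℝ) := fun x => by
        rw [abs_of_nonneg (hg0 x)]; exact min_le_right _ _
      have hgint : Integrable (fun ω => g (X ω)) P := int_bdd (hgm.comp hX) fun ω => hgb _
      have hgTint : Integrable (fun ω => g (X ω) * T ω) P :=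
        int_mul_bdd hgint hT.aestronglyMeasurable (C := 1) fun ω => by
          rw [abs_of_nonneg (hT01' ω).1]; exact (hT01' ω).2
      have hgπint : Integrable (fun ω => g (X ω) * π₀ (X ω)) P :=
        int_mul_bdd hgint (hπ₀_meas.comp hX).aestronglyMeasurable (C := 1)
          (fun ω => by rw [abs_of_nonneg (hπpos _).le]; have := (hc (X ω)).2; linarith)
      have step1 : c * ∫ ω, g (X ω) ∂P ≤ ∫ ω, g (X ω) * π₀ (X ω) ∂P := by
        rw [← integral_const_mul]
        refine integral_mono (hgint.const_mul c) hgπint fun ω => ?_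
        have := hg0 (X ω)
        have := hπc (X ω)
        nlinarith
      have step2 : ∫ ω, g (X ω) * π₀ (X ω) ∂P = ∫ ω, g (X ω) * T ω ∂P :=
        (keyT g hgm hgTint).symm
      have step3 : ∫ ω, g (X ω) * T ω ∂P ≤ ∫ ω, |μ₀ (T ω) (X ω)| ∂P := by
        refine integral_mono hgTint hMint fun ω => ?_
        rcases hT01 ω with h' | h' <;> rw [h']
        · simpa using abs_nonneg (μ₀ 0 (X ω))
        · rw [mul_one]
          exact min_le_left _ _
      have : ∫ ω, g (X ω) ∂P ≤ c⁻¹ * ∫ ω, |μ₀ (T ω) (X ω)| ∂P := by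
        rw [inv_mul_eq_div, le_div_iff₀ hc0]
        calc (∫ ω, g (X ω) ∂P) * c = c * ∫ ω, g (X ω) ∂P := by ring
          _ ≤ ∫ ω, g (X ω) * π₀ (X ω) ∂P := step1
          _ = ∫ ω, g (X ω) * T ω ∂P := step2
          _ ≤ ∫ ω, |μ₀ (T ω) (X ω)| ∂P := step3
      simpa [hgdef] using this
    have := (integrable_norm_iff (hμ₀1m.comp hX).aestronglyMeasurable).mp
      (by simpa [Real.norm_eq_abs] using habs)
    exact this
  have I0 : Integrable (fun ω => μ₀ 0 (X ω)) P := by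
    have habs : Integrable (fun ω => |μ₀ 0 (X ω)|) P := by
      refine integrable_of_trunc P (hμ₀0m.comp hX).abs (fun ω => abs_nonneg _)
        (M := c⁻¹ * ∫ ω, |μ₀ (T ω) (X ω)| ∂P) ?_
      intro n
      set g : 𝒳 → ℝ := fun x => min |μ₀ 0 x| n with hgdef
      have hgm : Measurable g := hμ₀0m.abs.min measurable_const
      have hg0 : ∀ x, 0 ≤ g x := fun x => le_min (abs_nonneg _) n.cast_nonneg
      have hgb : ∀ x, |g x| ≤ (n : ℝ) := fun x => by
        rw [abs_of_nonneg (hg0 x)]; exact min_le_right _ _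
      have hgint : Integrable (fun ω => g (X ω)) P := int_bdd (hgm.comp hX) fun ω => hgb _
      have hgTint : Integrable (fun ω => g (X ω) * T ω) P :=
        int_mul_bdd hgint hT.aestronglyMeasurable (C := 1) fun ω => by
          rw [abs_of_nonneg (hT01' ω).1]; exact (hT01' ω).2
      have hgTint' : Integrable (fun ω => g (X ω) * (1 - T ω)) P :=
        int_mul_bdd hgint (measurable_const.sub hT).aestronglyMeasurable (C := 1) fun ω => by
          rw [abs_of_nonneg (by linarith [(hT01' ω).2])]; linarith [(hT01' ω).1]
      have hgπint : Integrable (fun ω => g (X ω) * (1 - π₀ (X ω))) P :=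
        int_mul_bdd hgint (measurable_const.sub (hπ₀_meas.comp hX)).aestronglyMeasurable
          (C := 1) (fun ω => by
            rw [abs_of_nonneg (hπpos' _).le]; have := hπc (X ω); linarith)
      have step1 : c * ∫ ω, g (X ω) ∂P ≤ ∫ ω, g (X ω) * (1 - π₀ (X ω)) ∂P := by
        rw [← integral_const_mul]
        refine integral_mono (hgint.const_mul c) hgπint fun ω => ?_
        have := hg0 (X ω)
        have := hπc' (X ω)
        nlinarith
      have step2 : ∫ ω, g (X ω) * (1 - π₀ (X ω)) ∂P = ∫ ω, g (X ω) * (1 - T ω) ∂P :=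
        (keyT' g hgm hgint hgTint).symm
      have step3 : ∫ ω, g (X ω) * (1 - T ω) ∂P ≤ ∫ ω, |μ₀ (T ω) (X ω)| ∂P := by
        refine integral_mono hgTint' hMint fun ω => ?_
        rcases hT01 ω with h' | h' <;> rw [h']
        · rw [sub_zero, mul_one]
          exact min_le_left _ _
        · simpa using abs_nonneg (μ₀ 1 (X ω))
      have : ∫ ω, g (X ω) ∂P ≤ c⁻¹ * ∫ ω, |μ₀ (T ω) (X ω)| ∂P := by
        rw [inv_mul_eq_div, le_div_iff₀ hc0]
        calc (∫ ω, g (X ω) ∂P) * c = c * ∫ ω, g (X ω) ∂P := by ring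
          _ ≤ ∫ ω, g (X ω) * (1 - π₀ (X ω)) ∂P := step1
          _ = ∫ ω, g (X ω) * (1 - T ω) ∂P := step2
          _ ≤ ∫ ω, |μ₀ (T ω) (X ω)| ∂P := step3
      simpa [hgdef] using this
    have := (integrable_norm_iff (hμ₀0m.comp hX).aestronglyMeasurable).mp
      (by simpa [Real.norm_eq_abs] using habs)
    exact this
  -- the error functions
  have hD1m : Measurable (fun x => (μ₀ 1 x - μh 1 x) * h x) := (hμ₀1m.sub hμh1m).mul hh
  have hD0m : Measurable (fun x => (μ₀ 0 x - μh 0 x) * h x) := (hμ₀0m.sub hμh0m).mul hh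
  have hD1int : Integrable (fun ω => (μ₀ 1 (X ω) - μh 1 (X ω)) * h (X ω)) P :=
    int_mul_bdd (I1.sub (int_bdd (hμh1m.comp hX) fun ω => hμh_bdd 1 (X ω)))
      (hh.comp hX).aestronglyMeasurable (C := Bh) fun ω => hBh _
  have hD0int : Integrable (fun ω => (μ₀ 0 (X ω) - μh 0 (X ω)) * h (X ω)) P :=
    int_mul_bdd (I0.sub (int_bdd (hμh0m.comp hX) fun ω => hμh_bdd 0 (X ω)))
      (hh.comp hX).aestronglyMeasurable (C := Bh) fun ω => hBh _
  -- Step A : ∫ wh·h·(Y - μ₀(T,X)) = 0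
  have hA0 : ∫ ω, wh (T ω) (X ω) * h (X ω) * (Y ω - μ₀ (T ω) (X ω)) ∂P = 0 := by
    have hfsm : StronglyMeasurable[MeasurableSpace.comap (fun ω => (T ω, X ω)) inferInstance] (fun ω => wh (T ω) (X ω) * h (X ω)) := by
      have : Measurable[MeasurableSpace.comap (fun ω => (T ω, X ω)) inferInstance] (fun ω => wh (T ω) (X ω) * h (X ω)) :=
        (hwh_meas.mul (hh.comp measurable_snd)).comp hTXm₂
      exact this.stronglyMeasurable
    have hgint : Integrable (fun ω => Y ω - μ₀ (T ω) (X ω)) P := hY1.sub hμ₀TX_int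
    have hfgint : Integrable
        (fun ω => wh (T ω) (X ω) * h (X ω) * (Y ω - μ₀ (T ω) (X ω))) P := by
      have := hgint.bdd_mul (c := B * Bh)
        ((hwhTXm.mul (hh.comp hX)).aestronglyMeasurable)
        (Filter.Eventually.of_forall fun ω => by
          rw [Real.norm_eq_abs, Pi.mul_apply, Function.comp_apply, abs_mul]
          exact mul_le_mul (hwh_bdd (T ω) (X ω)) (hBh (X ω)) (abs_nonneg _)
            (le_trans (abs_nonneg _) (hwh_bdd (T ω) (X ω))))
      exact this
    rw [integral_mul_condexp' hm₂ P hfsm hfgint hgint]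
    have hzero : P[(fun ω => Y ω - μ₀ (T ω) (X ω))|MeasurableSpace.comap (fun ω => (T ω, X ω)) inferInstance] =ᵐ[P] 0 := by
      have hsub := condExp_sub (μ := P) (m := MeasurableSpace.comap (fun ω => (T ω, X ω)) inferInstance) hY1 hμ₀TX_int
      have heq : P[(fun ω => μ₀ (T ω) (X ω))|MeasurableSpace.comap (fun ω => (T ω, X ω)) inferInstance] = fun ω => μ₀ (T ω) (X ω) :=
        condExp_of_stronglyMeasurable hm₂
          ((hμ₀_meas.comp hTXm₂).stronglyMeasurable) hμ₀TX_int
      have : P[(fun ω => Y ω - μ₀ (T ω) (X ω))|MeasurableSpace.comap (fun ω => (T ω, X ω)) inferInstance]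
          =ᵐ[P] P[Y|MeasurableSpace.comap (fun ω => (T ω, X ω)) inferInstance] - P[(fun ω => μ₀ (T ω) (X ω))|MeasurableSpace.comap (fun ω => (T ω, X ω)) inferInstance] := hsub
      filter_upwards [this, hμ₀] with ω h₁ h₂
      simp only [Pi.sub_apply, Pi.zero_apply] at h₁ ⊢
      rw [h₁, heq, ← h₂]
      ring
    calc ∫ ω, wh (T ω) (X ω) * h (X ω)
          * (P[(fun ω => Y ω - μ₀ (T ω) (X ω))|MeasurableSpace.comap (fun ω => (T ω, X ω)) inferInstance]) ω ∂P
        = ∫ ω, (0 : ℝ) ∂P := by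
          refine integral_congr_ae ?_
          filter_upwards [hzero] with ω hω
          rw [hω]; simp
      _ = 0 := integral_zero _ _
  -- Step C : ∫ w₀·(μ₀ - μh)·h = ∫ D1 - ∫ D0
  have hG1m : Measurable (fun x => (μ₀ 1 x - μh 1 x) * h x * (π₀ x)⁻¹) := hD1m.mul hπ₀_meas.inv
  have hG0m : Measurable (fun x => (μ₀ 0 x - μh 0 x) * h x * (1 - π₀ x)⁻¹) :=
    hD0m.mul (measurable_const.sub hπ₀_meas).inv
  have hG1int : Integrable (fun ω => (μ₀ 1 (X ω) - μh 1 (X ω)) * h (X ω) * (π₀ (X ω))⁻¹) P :=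
    int_mul_bdd hD1int ((hπ₀_meas.comp hX).inv).aestronglyMeasurable (C := c⁻¹) fun ω => by
      rw [abs_of_nonneg (inv_nonneg.mpr (hπpos _).le)]
      exact inv_anti₀ hc0 (hπc _)
  have hG0int : Integrable
      (fun ω => (μ₀ 0 (X ω) - μh 0 (X ω)) * h (X ω) * (1 - π₀ (X ω))⁻¹) P :=
    int_mul_bdd hD0int ((measurable_const.sub (hπ₀_meas.comp hX)).inv).aestronglyMeasurable
      (C := c⁻¹) fun ω => by
      rw [abs_of_nonneg (inv_nonneg.mpr (hπpos' _).le)]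
      exact inv_anti₀ hc0 (hπc' _)
  have hG1Tint : Integrable
      (fun ω => (μ₀ 1 (X ω) - μh 1 (X ω)) * h (X ω) * (π₀ (X ω))⁻¹ * T ω) P :=
    int_mul_bdd hG1int hT.aestronglyMeasurable (C := 1) fun ω => by
      rw [abs_of_nonneg (hT01' ω).1]; exact (hT01' ω).2
  have hG0Tint : Integrable
      (fun ω => (μ₀ 0 (X ω) - μh 0 (X ω)) * h (X ω) * (1 - π₀ (X ω))⁻¹ * T ω) P :=
    int_mul_bdd hG0int hT.aestronglyMeasurable (C := 1) fun ω => by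
      rw [abs_of_nonneg (hT01' ω).1]; exact (hT01' ω).2
  have hG0Tint' : Integrable
      (fun ω => (μ₀ 0 (X ω) - μh 0 (X ω)) * h (X ω) * (1 - π₀ (X ω))⁻¹ * (1 - T ω)) P :=
    int_mul_bdd hG0int (measurable_const.sub hT).aestronglyMeasurable (C := 1) fun ω => by
      rw [abs_of_nonneg (by linarith [(hT01' ω).2])]; linarith [(hT01' ω).1]
  have hCint : Integrable
      (fun ω => w₀ (T ω) (X ω) * (μ₀ (T ω) (X ω) - μh (T ω) (X ω)) * h (X ω)) P := by
    have base : Integrable (fun ω =>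
        (μ₀ (T ω) (X ω) - μh (T ω) (X ω)) * (w₀ (T ω) (X ω) * h (X ω))) P :=
      int_mul_bdd (hμ₀TX_int.sub (int_bdd hμhTXm fun ω => hμh_bdd _ _))
        (hw₀TXm.mul (hh.comp hX)).aestronglyMeasurable (C := c⁻¹ * Bh) fun ω => by
          rw [abs_mul]
          exact mul_le_mul (hw₀bdd ω) (hBh (X ω)) (abs_nonneg _)
            (le_trans (abs_nonneg _) (hw₀bdd ω))
    exact base.congr (Filter.Eventually.of_forall fun ω => by ring)
  have hCval : ∫ ω, w₀ (T ω) (X ω) * (μ₀ (T ω) (X ω) - μh (T ω) (X ω)) * h (X ω) ∂P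
      = (∫ ω, (μ₀ 1 (X ω) - μh 1 (X ω)) * h (X ω) ∂P)
        - ∫ ω, (μ₀ 0 (X ω) - μh 0 (X ω)) * h (X ω) ∂P := by
    have hpt : ∀ ω, w₀ (T ω) (X ω) * (μ₀ (T ω) (X ω) - μh (T ω) (X ω)) * h (X ω)
        = (μ₀ 1 (X ω) - μh 1 (X ω)) * h (X ω) * (π₀ (X ω))⁻¹ * T ω
          - (μ₀ 0 (X ω) - μh 0 (X ω)) * h (X ω) * (1 - π₀ (X ω))⁻¹ * (1 - T ω) := by
      intro ω
      rcases hT01 ω with h' | h' <;> rw [h']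
      · rw [hw₀0]; ring
      · rw [hw₀1]; ring
    rw [integral_congr_ae (Filter.Eventually.of_forall hpt),
      integral_sub hG1Tint hG0Tint']
    have e1 : ∫ ω, (μ₀ 1 (X ω) - μh 1 (X ω)) * h (X ω) * (π₀ (X ω))⁻¹ * T ω ∂P
        = ∫ ω, (μ₀ 1 (X ω) - μh 1 (X ω)) * h (X ω) ∂P := by
      rw [keyT _ hG1m hG1Tint]
      refine integral_congr_ae (Filter.Eventually.of_forall fun ω => ?_)
      beta_reduce
      rw [mul_assoc, inv_mul_cancel₀ (ne_of_gt (hπpos (X ω))), mul_one]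
    have e0 : ∫ ω, (μ₀ 0 (X ω) - μh 0 (X ω)) * h (X ω) * (1 - π₀ (X ω))⁻¹ * (1 - T ω) ∂P
        = ∫ ω, (μ₀ 0 (X ω) - μh 0 (X ω)) * h (X ω) ∂P := by
      rw [keyT' _ hG0m hG0int hG0Tint]
      refine integral_congr_ae (Filter.Eventually.of_forall fun ω => ?_)
      beta_reduce
      rw [mul_assoc, inv_mul_cancel₀ (ne_of_gt (hπpos' (X ω))), mul_one]
    rw [e1, e0]
  -- integrability of the remaining pieces
  have hAint : Integrable (fun ω => wh (T ω) (X ω) * h (X ω) * (Y ω - μ₀ (T ω) (X ω))) P := by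
    have := (hY1.sub hμ₀TX_int).bdd_mul (c := B * Bh)
      ((hwhTXm.mul (hh.comp hX)).aestronglyMeasurable)
      (Filter.Eventually.of_forall fun ω => by
        rw [Real.norm_eq_abs, Pi.mul_apply, Function.comp_apply, abs_mul]
        exact mul_le_mul (hwh_bdd (T ω) (X ω)) (hBh (X ω)) (abs_nonneg _)
          (le_trans (abs_nonneg _) (hwh_bdd (T ω) (X ω))))
    exact this
  have hRint : Integrable (fun ω => (wh (T ω) (X ω) - w₀ (T ω) (X ω))
      * (μ₀ (T ω) (X ω) - μh (T ω) (X ω)) * h (X ω)) P := by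
    have base : Integrable (fun ω => (μ₀ (T ω) (X ω) - μh (T ω) (X ω))
        * ((wh (T ω) (X ω) - w₀ (T ω) (X ω)) * h (X ω))) P :=
      int_mul_bdd (hμ₀TX_int.sub (int_bdd hμhTXm fun ω => hμh_bdd _ _))
        (((hwhTXm.sub hw₀TXm)).mul (hh.comp hX)).aestronglyMeasurable
        (C := (B + c⁻¹) * Bh) fun ω => by
          rw [abs_mul]
          have h5 : |wh (T ω) (X ω) - w₀ (T ω) (X ω)| ≤ B + c⁻¹ :=
            (abs_sub _ _).trans (add_le_add (hwh_bdd _ _) (hw₀bdd ω))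
          exact mul_le_mul h5 (hBh (X ω)) (abs_nonneg _)
            (le_trans (abs_nonneg _) h5)
    exact base.congr (Filter.Eventually.of_forall fun ω => by ring)
  -- final assembly
  have hfun : (fun ω => (wh (T ω) (X ω) * (Y ω - μh (T ω) (X ω)) + μh 1 (X ω) - μh 0 (X ω)
          - (μ₀ 1 (X ω) - μ₀ 0 (X ω))) * h (X ω))
      = fun ω => (wh (T ω) (X ω) - w₀ (T ω) (X ω))
            * (μ₀ (T ω) (X ω) - μh (T ω) (X ω)) * h (X ω)
          + (wh (T ω) (X ω) * h (X ω) * (Y ω - μ₀ (T ω) (X ω))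
            + (w₀ (T ω) (X ω) * (μ₀ (T ω) (X ω) - μh (T ω) (X ω)) * h (X ω)
              + ((μ₀ 0 (X ω) - μh 0 (X ω)) * h (X ω)
                - (μ₀ 1 (X ω) - μh 1 (X ω)) * h (X ω)))) := by
    funext ω; ring
  have hsum3 : Integrable (fun ω => (μ₀ 0 (X ω) - μh 0 (X ω)) * h (X ω)
      - (μ₀ 1 (X ω) - μh 1 (X ω)) * h (X ω)) P := hD0int.sub hD1int
  have hsum2 : Integrable (fun ω =>
      w₀ (T ω) (X ω) * (μ₀ (T ω) (X ω) - μh (T ω) (X ω)) * h (X ω)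
      + ((μ₀ 0 (X ω) - μh 0 (X ω)) * h (X ω)
        - (μ₀ 1 (X ω) - μh 1 (X ω)) * h (X ω))) P := hCint.add hsum3
  have hsum1 : Integrable (fun ω =>
      wh (T ω) (X ω) * h (X ω) * (Y ω - μ₀ (T ω) (X ω))
      + (w₀ (T ω) (X ω) * (μ₀ (T ω) (X ω) - μh (T ω) (X ω)) * h (X ω)
        + ((μ₀ 0 (X ω) - μh 0 (X ω)) * h (X ω)
          - (μ₀ 1 (X ω) - μh 1 (X ω)) * h (X ω)))) P := hAint.add hsum2
  rw [hfun, integral_add hRint hsum1, integral_add hAint hsum2,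
    integral_add hCint hsum3, integral_sub hD0int hD1int, hA0, hCval]
  ring
end
end
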